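/- arXiv:2308.11847 — 3 statements merged into one kernel-verified Lean document; each statement's English description precedes it below -/
import Mathlib

section
/- Let R be a finite reduced crystallographic root system with a fixed base S of simple roots, and let I ⊆ S be any subset. Writing C := S \ I, the following inequality holds: ∑_{α ∈ C} ∑_{β ∈ R⁺ \ R_I} ⟨β, α∨⟩ ≤ #C + #(R⁺ \ R_I). -/
open scoped RealInnerProductSpace Classical

noncomputable section

/-- The crystallographic pairing `⟨β, α∨⟩ = 2(β,α)/(α,α)`. -/
def cpair {V : Type*} [NormedAddCommGroup V] [InnerProductSpace ℝ V] (β α : V) : ℝ :=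
  2 * ⟪β, α⟫ / ⟪α, α⟫

/-- A finite reduced crystallographic root system `R` in a real inner product space,
together with a fixed base `S` of simple roots. -/
structure RootSystemWithBase (V : Type*) [NormedAddCommGroup V] [InnerProductSpace ℝ V] where
  /-- The (finite) set of roots. -/
  R : Finset V
  /-- The base of simple roots. -/
  S : Finset V
  S_subset : S ⊆ R
  zero_not_mem : (0 : V) ∉ R
  /-- `R` is stable under the reflection associated to each root. -/
  reflect_mem : ∀ α ∈ R, ∀ β ∈ R, β - cpair β α • α ∈ R
  /-- The root system is crystallographic: all pairings are integers. -/
  crystallographic : ∀ α ∈ R, ∀ β ∈ R, ∃ n : ℤ, cpair β α = (n : ℝ)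
  /-- The root system is reduced: the only multiples of a root that are roots are `±` itself. -/
  reduced : ∀ α ∈ R, ∀ t : ℝ, t • α ∈ R → t = 1 ∨ t = -1
  /-- The simple roots are linearly independent. -/
  indep : LinearIndependent ℝ (fun s : S => (s : V))
  /-- Every root is a nonnegative or nonpositive integer combination of simple roots. -/
  base_expand : ∀ β ∈ R, β ∈ AddSubmonoid.closure (S : Set V) ∨
    -β ∈ AddSubmonoid.closure (S : Set V)

namespace RootSystemWithBase

variable {V : Type*} [NormedAddCommGroup V] [InnerProductSpace ℝ V]

/-- The positive roots `R⁺` determined by the base `S`. -/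
def posRoots (P : RootSystemWithBase V) : Finset V :=
  P.R.filter (fun β => β ∈ AddSubmonoid.closure (P.S : Set V))

/-- For `I ⊆ S`, the set `R_I` of roots lying in the `ℤ`-span of `I`. -/
def rootsIn (P : RootSystemWithBase V) (I : Finset V) : Finset V :=
  P.R.filter (fun β => β ∈ Submodule.span ℤ (I : Set V))

/-- The root system is irreducible: it is not the orthogonal direct sum of two nonempty
root subsystems (equivalently, its Dynkin diagram is connected). -/
def IsIrreducible (P : RootSystemWithBase V) : Prop :=
  ∀ R₁ R₂ : Finset V, R₁ ∪ R₂ = P.R → R₁.Nonempty → R₂.Nonempty →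
    (∀ a ∈ R₁, ∀ b ∈ R₂, ⟪a, b⟫ = 0) → False

end RootSystemWithBase

open RootSystemWithBase


section Aux
variable {V : Type*} [NormedAddCommGroup V] [InnerProductSpace ℝ V]

lemma cpair_add_left (x y α : V) : cpair (x + y) α = cpair x α + cpair y α := by
  unfold cpair; rw [inner_add_left]; ring

lemma cpair_smul_left (r : ℝ) (x α : V) : cpair (r • x) α = r * cpair x α := by
  unfold cpair; rw [real_inner_smul_left]; ring

lemma cpair_self {α : V} (h : α ≠ 0) : cpair α α = 2 := by
  have h2 : (⟪α, α⟫ : ℝ) ≠ 0 := fun e => h (inner_self_eq_zero.mp e)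
  unfold cpair; field_simp

lemma cpair_neg_right (x α : V) : cpair x (-α) = - cpair x α := by
  unfold cpair; rw [inner_neg_right, inner_neg_neg]; ring

lemma real_inner_self_pos' {x : V} (h : x ≠ 0) : (0:ℝ) < ⟪x, x⟫ :=
  lt_of_le_of_ne real_inner_self_nonneg (fun e => h (inner_self_eq_zero.mp e.symm))

/-- `cpair · α` as a linear map. -/
def cpairL (α : V) : V →ₗ[ℝ] ℝ where
  toFun β := cpair β α
  map_add' x y := cpair_add_left x y α
  map_smul' r x := cpair_smul_left r x α

@[simp] lemma cpairL_apply (α β : V) : cpairL α β = cpair β α := rfl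

namespace RootSystemWithBase
variable (P : RootSystemWithBase V)

lemma ne_zero_of_mem {α : V} (h : α ∈ P.R) : α ≠ 0 := fun e => P.zero_not_mem (e ▸ h)

lemma neg_mem {α : V} (h : α ∈ P.R) : -α ∈ P.R := by
  have h0 : α ≠ 0 := P.ne_zero_of_mem h
  have h2 := P.reflect_mem α h α h
  rw [cpair_self h0] at h2
  have : α - (2:ℝ) • α = -α := by rw [two_smul]; abel
  rwa [this] at h2

/-- If two roots pair negatively and are not opposite, their sum is a root. -/
lemma add_mem_of_cpair_neg {a b : V} (ha : a ∈ P.R) (hb : b ∈ P.R) (hne : b ≠ -a)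
    (hneg : cpair b a < 0) : b + a ∈ P.R := by
  have ha0 : a ≠ 0 := P.ne_zero_of_mem ha
  have hb0 : b ≠ 0 := P.ne_zero_of_mem hb
  have haa : (0:ℝ) < ⟪a, a⟫ := real_inner_self_pos' ha0
  have hbb : (0:ℝ) < ⟪b, b⟫ := real_inner_self_pos' hb0
  have hcpba : cpair b a = 2 * ⟪b, a⟫ / ⟪a, a⟫ := rfl
  have hcpab : cpair a b = 2 * ⟪a, b⟫ / ⟪b, b⟫ := rfl
  have hab : (⟪a, b⟫ : ℝ) = ⟪b, a⟫ := real_inner_comm b a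
  have hba : (⟪b, a⟫ : ℝ) < 0 := by
    by_contra hc
    push_neg at hc
    have : 0 ≤ cpair b a := by rw [hcpba]; positivity
    linarith
  have hq : cpair a b < 0 := by
    rw [hcpab, hab]
    exact div_neg_of_neg_of_pos (by linarith) hbb
  by_cases hp1 : cpair b a = -1
  · have h2 := P.reflect_mem a ha b hb
    rw [hp1] at h2
    have : b - (-1:ℝ) • a = b + a := by rw [neg_smul, one_smul]; abel
    rwa [this] at h2
  by_cases hq1 : cpair a b = -1
  · have h2 := P.reflect_mem b hb a ha
    rw [hq1] at h2
    have : a - (-1:ℝ) • b = b + a := by rw [neg_smul, one_smul]; abel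
    rwa [this] at h2
  · exfalso
    obtain ⟨p, hp⟩ := P.crystallographic a ha b hb
    obtain ⟨q, hqz⟩ := P.crystallographic b hb a ha
    have hp2 : cpair b a ≤ -2 := by
      rw [hp] at hp1 ⊢
      have h3 : (p:ℝ) < 0 := by rw [← hp]; exact hneg
      have h4 : p < 0 := by exact_mod_cast h3
      have h5 : p ≠ -1 := fun e => hp1 (by rw [e]; norm_num)
      have : p ≤ -2 := by omega
      exact_mod_cast this
    have hq2 : cpair a b ≤ -2 := by
      rw [hqz] at hq1 ⊢
      have h3 : (q:ℝ) < 0 := by rw [← hqz]; exact hq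
      have h4 : q < 0 := by exact_mod_cast h3
      have h5 : q ≠ -1 := fun e => hq1 (by rw [e]; norm_num)
      have : q ≤ -2 := by omega
      exact_mod_cast this
    have h1 : 2 * (⟪b, a⟫:ℝ) ≤ -2 * ⟪a, a⟫ := by
      rw [hcpba] at hp2
      have := (div_le_iff₀ haa).mp hp2
      linarith
    have h2 : 2 * (⟪a, b⟫:ℝ) ≤ -2 * ⟪b, b⟫ := by
      rw [hcpab] at hq2
      have := (div_le_iff₀ hbb).mp hq2
      linarith
    have hzero : (⟪a + b, a + b⟫:ℝ) ≤ 0 := by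
      rw [inner_add_add_self]
      linarith
    have hab0 : a + b = 0 :=
      inner_self_eq_zero.mp (le_antisymm hzero real_inner_self_nonneg)
    have hba0 : b + a = 0 := by rw [add_comm]; exact hab0
    exact hne (eq_neg_of_add_eq_zero_left hba0)

end RootSystemWithBase
end Aux

section Aux2
variable {V : Type*} [NormedAddCommGroup V] [InnerProductSpace ℝ V]
namespace RootSystemWithBase
variable (P : RootSystemWithBase V)

/-- The `α`-string through `γ`: if `⟨γ, α∨⟩ = -k` then `γ + jα` is a root for `0 ≤ j ≤ k`. -/
lemma chain_mem {γ α : V} (hγ : γ ∈ P.R) (hα : α ∈ P.R) (k : ℕ) (hk : cpair γ α = -(k:ℝ))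
    (hne : ∀ j : ℕ, γ + (j:ℝ) • α ≠ -α) :
    ∀ j : ℕ, j ≤ k → γ + (j:ℝ) • α ∈ P.R := by
  have hα0 : α ≠ 0 := P.ne_zero_of_mem hα
  intro j
  induction j using Nat.strong_induction_on with
  | _ j ih =>
    intro hjk
    match j, hjk with
    | 0, _ => simpa using hγ
    | (m+1), hjk =>
      have hm : γ + (m:ℝ) • α ∈ P.R := ih m (by omega) (by omega)
      have hcp : cpair (γ + (m:ℝ) • α) α = -(k:ℝ) + 2*m := by
        rw [cpair_add_left, cpair_smul_left, cpair_self hα0, hk]; ring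
      by_cases hcase : 2*m < k
      · have hneg : cpair (γ + (m:ℝ) • α) α < 0 := by
          rw [hcp]
          have : (2*m : ℝ) < (k:ℝ) := by exact_mod_cast hcase
          linarith
        have h2 := P.add_mem_of_cpair_neg hα hm (hne m) hneg
        have heq : γ + (m:ℝ) • α + α = γ + ((m+1 : ℕ):ℝ) • α := by
          push_cast
          rw [add_smul, one_smul]
          abel
        rwa [heq] at h2
      · -- reflect the element at position k - (m+1)
        obtain ⟨m', hm'⟩ : ∃ m', m' + (m+1) = k := ⟨k - (m+1), by omega⟩
        have hδ : γ + (m':ℝ) • α ∈ P.R := ih m' (by omega) (by omega)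
        have h2 := P.reflect_mem α hα _ hδ
        have hcp' : cpair (γ + (m':ℝ) • α) α = -(k:ℝ) + 2*m' := by
          rw [cpair_add_left, cpair_smul_left, cpair_self hα0, hk]; ring
        rw [hcp'] at h2
        have heq : γ + (m':ℝ) • α - (-(k:ℝ) + 2*m') • α = γ + ((m+1 : ℕ):ℝ) • α := by
          have hkeq : (k:ℝ) = (m':ℝ) + (m:ℝ) + 1 := by exact_mod_cast hm'.symm
          rw [hkeq]
          push_cast
          module
        rwa [heq] at h2

end RootSystemWithBase
end Aux2

section Aux3
variable {V : Type*} [NormedAddCommGroup V] [InnerProductSpace ℝ V]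
namespace RootSystemWithBase
variable (P : RootSystemWithBase V)

lemma indepSet : LinearIndepOn ℝ id (↑P.S : Set V) := P.indep

/-- Coordinate functional associated to a simple root, via an extension of `S` to a basis. -/
def coordFn (t : V) : V →ₗ[ℝ] ℝ :=
  if h : t ∈ (P.S : Set V) then
    (Module.Basis.extend P.indepSet).coord ⟨t, P.indepSet.subset_extend (Set.subset_univ _) h⟩
  else 0

lemma coordFn_self {t : V} (ht : t ∈ P.S) : P.coordFn t t = 1 := by
  have ht' : t ∈ (P.S : Set V) := ht
  rw [coordFn, dif_pos ht']
  set i : ↥(P.indepSet.extend (Set.subset_univ _)) :=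
    ⟨t, P.indepSet.subset_extend (Set.subset_univ _) ht'⟩ with hi
  have hbt : (Module.Basis.extend P.indepSet) i = t := Module.Basis.extend_apply_self _ _
  rw [← hbt, Module.Basis.coord_apply, Module.Basis.repr_self]
  simp

lemma coordFn_eq_zero {t u : V} (ht : t ∈ P.S) (hu : u ∈ P.S) (hne : t ≠ u) :
    P.coordFn t u = 0 := by
  have ht' : t ∈ (P.S : Set V) := ht
  have hu' : u ∈ (P.S : Set V) := hu
  rw [coordFn, dif_pos ht']
  set i : ↥(P.indepSet.extend (Set.subset_univ _)) :=
    ⟨t, P.indepSet.subset_extend (Set.subset_univ _) ht'⟩ with hi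
  set j : ↥(P.indepSet.extend (Set.subset_univ _)) :=
    ⟨u, P.indepSet.subset_extend (Set.subset_univ _) hu'⟩ with hj
  have hbu : (Module.Basis.extend P.indepSet) j = u := Module.Basis.extend_apply_self _ _
  rw [← hbu, Module.Basis.coord_apply, Module.Basis.repr_self, Finsupp.single_apply, if_neg]
  intro h
  apply hne
  have : (j : V) = (i : V) := congrArg Subtype.val h
  rw [hi, hj] at this
  exact this.symm

lemma coordFn_span_zero {t : V} (ht : t ∈ P.S) {s : Set V} (hs : s ⊆ ↑P.S) (hts : t ∉ s)
    {x : V} (hx : x ∈ Submodule.span ℝ s) : P.coordFn t x = 0 := by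
  have : Submodule.span ℝ s ≤ LinearMap.ker (P.coordFn t) := by
    rw [Submodule.span_le]
    intro u hu
    have hu' : u ∈ P.S := hs hu
    have : t ≠ u := fun e => hts (e ▸ hu)
    simpa using P.coordFn_eq_zero ht hu' this
  exact this hx

/-- Every element of the additive closure of `S` is a nonneg integer combination. -/
lemma exists_nat_coeffs {x : V} (hx : x ∈ AddSubmonoid.closure (P.S : Set V)) :
    ∃ f : V → ℕ, x = ∑ t ∈ P.S, (f t : ℝ) • t := by
  obtain ⟨l, hl, hsum⟩ := AddSubmonoid.exists_multiset_of_mem_closure hx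
  refine ⟨fun t => l.count t, ?_⟩
  have h1 : ∑ a ∈ l.toFinset, l.count a • a = l.sum := by
    have := (Finset.sum_multiset_map_count l (id : V → V)).symm
    simpa using this
  have hsub : l.toFinset ⊆ P.S := by
    intro a ha
    exact hl a (Multiset.mem_toFinset.mp ha)
  have h2 : ∑ a ∈ P.S, l.count a • a = ∑ a ∈ l.toFinset, l.count a • a := by
    refine (Finset.sum_subset hsub ?_).symm
    intro a _ ha
    rw [Multiset.count_eq_zero_of_notMem (fun h => ha (Multiset.mem_toFinset.mpr h))]
    simp
  rw [← hsum, ← h1, ← h2]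
  refine Finset.sum_congr rfl fun a _ => ?_
  rw [Nat.cast_smul_eq_nsmul]

lemma coordFn_rep {f : V → ℕ} {t : V} (ht : t ∈ P.S) :
    P.coordFn t (∑ u ∈ P.S, (f u : ℝ) • u) = f t := by
  rw [map_sum]
  rw [Finset.sum_eq_single t]
  · rw [map_smul, P.coordFn_self ht]; simp
  · intro u hu hne
    rw [map_smul, P.coordFn_eq_zero ht hu hne.symm]; simp
  · intro h; exact absurd ht h

end RootSystemWithBase
end Aux3

section Aux4
variable {V : Type*} [NormedAddCommGroup V] [InnerProductSpace ℝ V]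

lemma cpair_neg_left (x α : V) : cpair (-x) α = - cpair x α := by
  have := cpair_smul_left (-1 : ℝ) x α
  simpa using this

lemma cpair_sub_left (x y α : V) : cpair (x - y) α = cpair x α - cpair y α := by
  rw [sub_eq_add_neg, cpair_add_left, cpair_neg_left, sub_eq_add_neg]

namespace RootSystemWithBase
variable (P : RootSystemWithBase V)

lemma mem_posRoots {β : V} :
    β ∈ P.posRoots ↔ β ∈ P.R ∧ β ∈ AddSubmonoid.closure (P.S : Set V) := by
  rw [posRoots, Finset.mem_filter]

lemma simple_mem_posRoots {α : V} (hα : α ∈ P.S) : α ∈ P.posRoots :=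
  P.mem_posRoots.mpr ⟨P.S_subset hα, AddSubmonoid.subset_closure hα⟩

lemma coord_nonneg {x : V} (hx : x ∈ AddSubmonoid.closure (P.S : Set V)) {t : V}
    (ht : t ∈ P.S) : 0 ≤ P.coordFn t x := by
  obtain ⟨f, hf⟩ := P.exists_nat_coeffs hx
  rw [hf, P.coordFn_rep ht]
  positivity

lemma exists_other_coord {α β : V} (hα : α ∈ P.S) (hβ : β ∈ P.posRoots) (hne : β ≠ α) :
    ∃ t₀ ∈ P.S, t₀ ≠ α ∧ 1 ≤ P.coordFn t₀ β := by
  obtain ⟨hβR, hβc⟩ := P.mem_posRoots.mp hβ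
  obtain ⟨f, hf⟩ := P.exists_nat_coeffs hβc
  by_contra hc
  push_neg at hc
  have hzero : ∀ t ∈ P.S, t ≠ α → f t = 0 := by
    intro t ht htα
    have h1 := hc t ht htα
    rw [hf, P.coordFn_rep ht] at h1
    have : (f t : ℝ) < 1 := h1
    exact_mod_cast Nat.lt_one_iff.mp (by exact_mod_cast this)
  have hβα : β = ((f α : ℝ)) • α := by
    rw [hf, Finset.sum_eq_single α]
    · intro t ht htα
      rw [hzero t ht htα]; simp
    · intro h; exact absurd hα h
  have := P.reduced α (P.S_subset hα) ((f α : ℝ)) (by rw [← hβα]; exact hβR)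
  rcases this with h1 | h1
  · exact hne (by rw [hβα, h1, one_smul])
  · have : (0:ℝ) ≤ (f α : ℝ) := Nat.cast_nonneg _
    rw [h1] at this; linarith

lemma reflect_posRoots {α β : V} (hα : α ∈ P.S) (hβ : β ∈ P.posRoots) (hne : β ≠ α) :
    β - cpair β α • α ∈ P.posRoots ∧ β - cpair β α • α ≠ α := by
  obtain ⟨hβR, hβc⟩ := P.mem_posRoots.mp hβ
  have hαR : α ∈ P.R := P.S_subset hα
  have hgR : β - cpair β α • α ∈ P.R := P.reflect_mem α hαR β hβR
  obtain ⟨t₀, ht₀S, ht₀α, ht₀ge⟩ := P.exists_other_coord hα hβ hne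
  have hcoordg : 1 ≤ P.coordFn t₀ (β - cpair β α • α) := by
    rw [map_sub, map_smul, P.coordFn_eq_zero ht₀S hα ht₀α]
    simpa using ht₀ge
  have hgne : β - cpair β α • α ≠ α := by
    intro h
    rw [h, P.coordFn_eq_zero ht₀S hα ht₀α] at hcoordg
    linarith
  refine ⟨P.mem_posRoots.mpr ⟨hgR, ?_⟩, hgne⟩
  rcases P.base_expand _ hgR with hpos | hneg
  · exact hpos
  · exfalso
    have h0 := P.coord_nonneg hneg ht₀S
    rw [map_neg] at h0
    linarith

end RootSystemWithBase
end Aux4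

section Aux5
variable {V : Type*} [NormedAddCommGroup V] [InnerProductSpace ℝ V]
namespace RootSystemWithBase
variable (P : RootSystemWithBase V)

/-- The sum of the pairings of all positive roots against a simple coroot is `2`. -/
lemma sum_cpair_posRoots {α : V} (hα : α ∈ P.S) :
    ∑ β ∈ P.posRoots, cpair β α = 2 := by
  have hαR : α ∈ P.R := P.S_subset hα
  have hα0 : α ≠ 0 := P.ne_zero_of_mem hαR
  have hαpos : α ∈ P.posRoots := P.simple_mem_posRoots hα
  rw [← Finset.add_sum_erase _ _ hαpos, cpair_self hα0]
  have hzero : ∑ β ∈ P.posRoots.erase α, cpair β α = 0 := by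
    refine Finset.sum_involution (fun β _ => β - cpair β α • α) ?_ ?_ ?_ ?_
    · intro β _
      rw [cpair_sub_left, cpair_smul_left, cpair_self hα0]
      ring
    · intro β _ hfne heq
      have hsm : cpair β α • α = 0 := by
        have h2 : β - cpair β α • α - β = 0 := by rw [heq]; abel
        have h3 : -(cpair β α • α) = 0 := by rw [← h2]; abel
        simpa using h3
      rcases smul_eq_zero.mp hsm with h | h
      · exact hfne h
      · exact hα0 h
    · intro β hβ
      rw [Finset.mem_erase] at hβ ⊢
      obtain ⟨hβne, hβpos⟩ := hβ
      obtain ⟨h1, h2⟩ := P.reflect_posRoots hα hβpos hβne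
      exact ⟨h2, h1⟩
    · intro β hβ
      have hc : cpair (β - cpair β α • α) α = - cpair β α := by
        rw [cpair_sub_left, cpair_smul_left, cpair_self hα0]; ring
      show β - cpair β α • α - cpair (β - cpair β α • α) α • α = β
      rw [hc, neg_smul, sub_neg_eq_add, sub_add_cancel]
  rw [hzero, add_zero]

/-- Distinct simple roots pair nonpositively. -/
lemma cpair_simple_nonpos {α t : V} (hα : α ∈ P.S) (ht : t ∈ P.S) (hne : t ≠ α) :
    cpair t α ≤ 0 := by
  by_contra hc
  push_neg at hc
  have hαR : α ∈ P.R := P.S_subset hα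
  have htR : t ∈ P.R := P.S_subset ht
  have hnegα : -α ∈ P.R := P.neg_mem hαR
  have hpair : cpair t (-α) < 0 := by rw [cpair_neg_right]; linarith
  have htne : t ≠ -(-α) := by rw [neg_neg]; exact hne
  have hmem := P.add_mem_of_cpair_neg hnegα htR htne hpair
  -- t + -α = t - α ∈ R
  have hsub : t - α ∈ P.R := by rwa [← sub_eq_add_neg] at hmem
  rcases P.base_expand _ hsub with hpos | hneg
  · obtain ⟨f, hf⟩ := P.exists_nat_coeffs hpos
    have h1 : P.coordFn α (t - α) = (f α : ℝ) := by rw [hf, P.coordFn_rep hα]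
    rw [map_sub, P.coordFn_eq_zero hα ht (Ne.symm hne), P.coordFn_self hα] at h1
    have : (0:ℝ) ≤ (f α : ℝ) := Nat.cast_nonneg _
    linarith
  · rw [neg_sub] at hneg
    obtain ⟨f, hf⟩ := P.exists_nat_coeffs hneg
    have h1 : P.coordFn t (α - t) = (f t : ℝ) := by rw [hf, P.coordFn_rep ht]
    rw [map_sub, P.coordFn_eq_zero ht hα hne, P.coordFn_self ht] at h1
    have : (0:ℝ) ≤ (f t : ℝ) := Nat.cast_nonneg _
    linarith

end RootSystemWithBase
end Aux5

section Aux6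
variable {V : Type*} [NormedAddCommGroup V] [InnerProductSpace ℝ V]
namespace RootSystemWithBase
variable (P : RootSystemWithBase V)

lemma coordFn_zero_of_zspan {I : Finset V} (hI : I ⊆ P.S) {t : V} (ht : t ∈ P.S) (htI : t ∉ I)
    {x : V} (hx : x ∈ Submodule.span ℤ (I : Set V)) : P.coordFn t x = 0 := by
  have hx' : x ∈ Submodule.span ℝ (I : Set V) :=
    Submodule.span_subset_span ℤ ℝ (I : Set V) hx
  exact P.coordFn_span_zero ht (by exact_mod_cast hI) htI hx'

/-- A positive root in `R_I` pairs nonpositively (and integrally) with any simple coroot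
outside `I`. -/
lemma exists_nat_neg_cpair {I : Finset V} (hI : I ⊆ P.S) {α γ : V} (hαS : α ∈ P.S) (hαI : α ∉ I)
    (hγ : γ ∈ P.posRoots) (hγI : γ ∈ Submodule.span ℤ (I : Set V)) :
    ∃ n : ℕ, cpair γ α = -(n : ℝ) := by
  obtain ⟨hγR, hγc⟩ := P.mem_posRoots.mp hγ
  obtain ⟨z, hz⟩ := P.crystallographic α (P.S_subset hαS) γ hγR
  have hnonpos : cpair γ α ≤ 0 := by
    obtain ⟨f, hf⟩ := P.exists_nat_coeffs hγc
    have hγeq : cpair γ α = ∑ t ∈ P.S, (f t : ℝ) * cpair t α := by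
      calc cpair γ α = cpairL α γ := rfl
        _ = ∑ t ∈ P.S, (f t : ℝ) * cpair t α := by
            rw [hf, map_sum]
            exact Finset.sum_congr rfl fun t _ => by rw [map_smul]; simp [smul_eq_mul]
    rw [hγeq]
    apply Finset.sum_nonpos
    intro t ht
    by_cases htI : t ∈ I
    · have htα : t ≠ α := fun e => hαI (e ▸ htI)
      have := P.cpair_simple_nonpos hαS ht htα
      have hft : (0:ℝ) ≤ (f t : ℝ) := Nat.cast_nonneg _
      exact mul_nonpos_of_nonneg_of_nonpos hft this
    · have hft : P.coordFn t γ = 0 := P.coordFn_zero_of_zspan hI ht htI hγI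
      rw [hf, P.coordFn_rep ht] at hft
      rw [hft]
      simp
  have hzle : z ≤ 0 := by
    have : (z:ℝ) ≤ 0 := by rw [← hz]; exact hnonpos
    exact_mod_cast this
  refine ⟨(-z).toNat, ?_⟩
  rw [hz]
  have : ((-z).toNat : ℤ) = -z := Int.toNat_of_nonneg (by omega)
  have h2 : ((-z).toNat : ℝ) = -(z:ℝ) := by exact_mod_cast this
  rw [h2]
  ring

end RootSystemWithBase
end Aux6

section Aux7
variable {V : Type*} [NormedAddCommGroup V] [InnerProductSpace ℝ V]
namespace RootSystemWithBase
variable (P : RootSystemWithBase V)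

lemma count_bound {I : Finset V} (hI : I ⊆ P.S) {α : V} (hαS : α ∈ P.S) (hαI : α ∉ I) :
    ∑ γ ∈ P.posRoots ∩ P.rootsIn I, (-(cpair γ α))
      ≤ (((P.posRoots \ P.rootsIn I).filter
          (fun β => β ∈ Submodule.span ℝ (insert α (I : Set V)))).card : ℝ) - 1 := by
  classical
  set PI := P.posRoots ∩ P.rootsIn I with hPI
  set Nα := (P.posRoots \ P.rootsIn I).filter
      (fun β => β ∈ Submodule.span ℝ (insert α (I : Set V))) with hNα
  have hαR : α ∈ P.R := P.S_subset hαS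
  have hα0 : α ≠ 0 := P.ne_zero_of_mem hαR
  have hPIfacts : ∀ γ ∈ PI, γ ∈ P.R ∧ γ ∈ AddSubmonoid.closure (P.S : Set V) ∧
      γ ∈ Submodule.span ℤ (I : Set V) := by
    intro γ hγ
    rw [hPI, Finset.mem_inter] at hγ
    obtain ⟨h1, h2⟩ := hγ
    rw [rootsIn, Finset.mem_filter] at h2
    obtain ⟨h3, h4⟩ := P.mem_posRoots.mp h1
    exact ⟨h3, h4, h2.2⟩
  have hk : ∀ γ ∈ PI, ∃ n : ℕ, cpair γ α = -(n : ℝ) := by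
    intro γ hγ
    obtain ⟨h1, _⟩ := Finset.mem_inter.mp (hPI ▸ hγ)
    exact P.exists_nat_neg_cpair hI hαS hαI h1 (hPIfacts γ hγ).2.2
  set k : V → ℕ := fun γ => if h : ∃ n : ℕ, cpair γ α = -(n : ℝ) then h.choose else 0 with hkdef
  have hkspec : ∀ γ ∈ PI, cpair γ α = -(k γ : ℝ) := by
    intro γ hγ
    have h := hk γ hγ
    rw [hkdef]
    simp only [dif_pos h]
    exact h.choose_spec
  have hcoordα : ∀ γ ∈ PI, P.coordFn α γ = 0 := fun γ hγ =>
    P.coordFn_zero_of_zspan hI hαS hαI (hPIfacts γ hγ).2.2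
  -- every string element lies in `Nα.erase α`
  have hstring : ∀ γ ∈ PI, ∀ j : ℕ, 1 ≤ j → j ≤ k γ → γ + (j:ℝ) • α ∈ Nα.erase α := by
    intro γ hγ j hj1 hjk
    obtain ⟨hγR, hγc, hγz⟩ := hPIfacts γ hγ
    have hne : ∀ m : ℕ, γ + (m:ℝ) • α ≠ -α := by
      intro m he
      have hL : P.coordFn α (γ + (m:ℝ) • α) = (m:ℝ) := by
        rw [map_add, map_smul, hcoordα γ hγ, P.coordFn_self hαS, smul_eq_mul]; ring
      have hR : P.coordFn α (-α) = -1 := by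
        rw [map_neg, P.coordFn_self hαS]
      rw [he, hR] at hL
      have hge : (0:ℝ) ≤ (m:ℝ) := Nat.cast_nonneg _
      linarith
    have hβR : γ + (j:ℝ) • α ∈ P.R := P.chain_mem hγR hαR (k γ) (hkspec γ hγ) hne j hjk
    have hcoordβ : P.coordFn α (γ + (j:ℝ) • α) = (j:ℝ) := by
      rw [map_add, map_smul, hcoordα γ hγ, P.coordFn_self hαS, smul_eq_mul]; ring
    have hβne : γ + (j:ℝ) • α ≠ α := by
      intro he
      have h2 := congrArg (P.coordFn α) he
      rw [hcoordβ, P.coordFn_self hαS] at h2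
      have hj1' : j = 1 := by exact_mod_cast h2
      rw [hj1'] at he
      have h3 : γ + α = α := by
        have : ((1:ℕ):ℝ) • α = α := by norm_num
        rwa [this] at he
      have h4 : γ = 0 := add_eq_right.mp h3
      exact P.zero_not_mem (h4 ▸ hγR)
    have hβc : γ + (j:ℝ) • α ∈ AddSubmonoid.closure (P.S : Set V) := by
      have h1 : ((j:ℝ)) • α = j • α := Nat.cast_smul_eq_nsmul ℝ j α
      rw [h1]
      exact AddSubmonoid.add_mem _ hγc
        (AddSubmonoid.nsmul_mem _ (AddSubmonoid.subset_closure hαS) j)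
    have hβnotI : γ + (j:ℝ) • α ∉ P.rootsIn I := by
      intro hmem
      rw [rootsIn, Finset.mem_filter] at hmem
      have h0 := P.coordFn_zero_of_zspan hI hαS hαI hmem.2
      rw [hcoordβ] at h0
      have : (1:ℝ) ≤ (j:ℝ) := by exact_mod_cast hj1
      linarith
    have hβspan : γ + (j:ℝ) • α ∈ Submodule.span ℝ (insert α (I : Set V)) := by
      have h1 : γ ∈ Submodule.span ℝ (I : Set V) := Submodule.span_subset_span ℤ ℝ _ hγz
      have h2 : γ ∈ Submodule.span ℝ (insert α (I : Set V)) :=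
        Submodule.span_mono (Set.subset_insert _ _) h1
      exact Submodule.add_mem _ h2
        (Submodule.smul_mem _ _ (Submodule.subset_span (Set.mem_insert _ _)))
    refine Finset.mem_erase.mpr ⟨hβne, ?_⟩
    rw [hNα, Finset.mem_filter, Finset.mem_sdiff]
    exact ⟨⟨P.mem_posRoots.mpr ⟨hβR, hβc⟩, hβnotI⟩, hβspan⟩
  -- the counting injection
  have hcard : ∑ γ ∈ PI, k γ ≤ (Nα.erase α).card := by
    have hinj := Finset.card_le_card_of_injOn
      (f := fun p : (Σ _ : V, ℕ) => p.1 + ((p.2 + 1 : ℕ) : ℝ) • α)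
      (s := PI.sigma (fun γ => Finset.range (k γ))) (t := Nα.erase α)
      (by
        intro p hp
        rw [Finset.mem_coe, Finset.mem_sigma] at hp
        exact hstring p.1 hp.1 (p.2 + 1) (by omega) (by
          have := Finset.mem_range.mp hp.2
          omega))
      (by
        intro p hp q hq he
        rw [Finset.coe_sigma] at hp hq
        obtain ⟨γ1, j1⟩ := p
        obtain ⟨γ2, j2⟩ := q
        simp only at he
        have hp1 : γ1 ∈ PI := by
          have := hp; simp only [Set.mem_sigma_iff, Finset.mem_coe] at this; exact this.1
        have hq1 : γ2 ∈ PI := by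
          have := hq; simp only [Set.mem_sigma_iff, Finset.mem_coe] at this; exact this.1
        have hcoord := congrArg (P.coordFn α) he
        have e1 : P.coordFn α (γ1 + ((j1 + 1 : ℕ) : ℝ) • α) = ((j1 + 1 : ℕ) : ℝ) := by
          rw [map_add, map_smul, hcoordα γ1 hp1, P.coordFn_self hαS, smul_eq_mul]; ring
        have e2 : P.coordFn α (γ2 + ((j2 + 1 : ℕ) : ℝ) • α) = ((j2 + 1 : ℕ) : ℝ) := by
          rw [map_add, map_smul, hcoordα γ2 hq1, P.coordFn_self hαS, smul_eq_mul]; ring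
        rw [e1, e2] at hcoord
        have hj : j1 = j2 := by
          have : j1 + 1 = j2 + 1 := by exact_mod_cast hcoord
          omega
        subst hj
        have hγ12 : γ1 = γ2 := by
          have := he
          exact add_right_cancel this
        subst hγ12
        rfl)
    rwa [Finset.card_sigma, Finset.sum_congr rfl
      (fun γ _ => Finset.card_range (k γ))] at hinj
  -- `α` itself belongs to `Nα`
  have hαNα : α ∈ Nα := by
    rw [hNα, Finset.mem_filter, Finset.mem_sdiff]
    refine ⟨⟨P.simple_mem_posRoots hαS, ?_⟩,
      Submodule.subset_span (Set.mem_insert _ _)⟩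
    intro hmem
    rw [rootsIn, Finset.mem_filter] at hmem
    have h0 := P.coordFn_zero_of_zspan hI hαS hαI hmem.2
    rw [P.coordFn_self hαS] at h0
    norm_num at h0
  have hposcard : 1 ≤ Nα.card := Finset.card_pos.mpr ⟨α, hαNα⟩
  have herase : (Nα.erase α).card = Nα.card - 1 := Finset.card_erase_of_mem hαNα
  -- put everything together
  have hsum : ∑ γ ∈ PI, (-(cpair γ α)) = ((∑ γ ∈ PI, k γ : ℕ) : ℝ) := by
    rw [Nat.cast_sum]
    refine Finset.sum_congr rfl fun γ hγ => ?_
    rw [hkspec γ hγ]; ring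
  rw [hsum]
  have h1 : ((∑ γ ∈ PI, k γ : ℕ) : ℝ) ≤ (((Nα.erase α).card : ℕ) : ℝ) := by
    exact_mod_cast hcard
  have h2 : (((Nα.erase α).card : ℕ) : ℝ) = (Nα.card : ℝ) - 1 := by
    rw [herase, Nat.cast_sub hposcard]
    norm_num
  linarith

end RootSystemWithBase
end Aux7

section Aux8
variable {V : Type*} [NormedAddCommGroup V] [InnerProductSpace ℝ V]
namespace RootSystemWithBase
variable (P : RootSystemWithBase V)

lemma mem_zspan_of_coords {I : Finset V} (hI : I ⊆ P.S) {β : V}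
    (hβc : β ∈ AddSubmonoid.closure (P.S : Set V))
    (hcoords : ∀ t ∈ P.S, t ∉ I → P.coordFn t β = 0) :
    β ∈ Submodule.span ℤ (I : Set V) := by
  obtain ⟨f, hf⟩ := P.exists_nat_coeffs hβc
  have hzero : ∀ t ∈ P.S, t ∉ I → (f t : ℝ) = 0 := by
    intro t ht htI
    have := hcoords t ht htI
    rw [hf, P.coordFn_rep ht] at this
    exact this
  have hβeq : β = ∑ t ∈ I, (f t : ℝ) • t := by
    rw [hf]
    refine (Finset.sum_subset hI ?_).symm
    intro t ht htI
    rw [hzero t ht htI, zero_smul]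
  rw [hβeq]
  refine Submodule.sum_mem _ fun t ht => ?_
  have h1 : ((f t : ℝ)) • t = f t • t := Nat.cast_smul_eq_nsmul ℝ (f t) t
  rw [h1]
  exact nsmul_mem (Submodule.subset_span ht) (f t)

lemma Nfun_disjoint {I : Finset V} (hI : I ⊆ P.S) {α α' : V}
    (hα : α ∈ P.S) (hαI : α ∉ I) (hα' : α' ∈ P.S) (hα'I : α' ∉ I) (hne : α ≠ α') :
    Disjoint ((P.posRoots \ P.rootsIn I).filter
        (fun β => β ∈ Submodule.span ℝ (insert α (I : Set V))))
      ((P.posRoots \ P.rootsIn I).filter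
        (fun β => β ∈ Submodule.span ℝ (insert α' (I : Set V)))) := by
  rw [Finset.disjoint_left]
  intro β h1 h2
  rw [Finset.mem_filter, Finset.mem_sdiff] at h1 h2
  obtain ⟨⟨hβpos, hβnotI⟩, hβsp1⟩ := h1
  obtain ⟨⟨_, _⟩, hβsp2⟩ := h2
  obtain ⟨hβR, hβc⟩ := P.mem_posRoots.mp hβpos
  have hIsub : (I : Set V) ⊆ (P.S : Set V) := by exact_mod_cast hI
  apply hβnotI
  rw [rootsIn, Finset.mem_filter]
  refine ⟨hβR, P.mem_zspan_of_coords hI hβc ?_⟩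
  intro t ht htI
  by_cases htα : t = α
  · -- use the span through α'
    subst htα
    refine P.coordFn_span_zero ht ?_ ?_ hβsp2
    · exact Set.insert_subset hα' hIsub
    · intro hmem
      rcases Set.mem_insert_iff.mp hmem with h | h
      · exact hne h
      · exact htI h
  · refine P.coordFn_span_zero ht ?_ ?_ hβsp1
    · exact Set.insert_subset hα hIsub
    · intro hmem
      rcases Set.mem_insert_iff.mp hmem with h | h
      · exact htα h
      · exact htI h

end RootSystemWithBase
end Aux8
/-- For a finite reduced crystallographic root system with base `S` and any
`I ⊆ S`, with `C := S \ I`: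
`∑_{α ∈ C} ∑_{β ∈ R⁺ \ R_I} ⟨β, α∨⟩ ≤ #C + #(R⁺ \ R_I)`. -/
theorem root_inequality {V : Type*} [NormedAddCommGroup V] [InnerProductSpace ℝ V]
    (P : RootSystemWithBase V) (I : Finset V) (hI : I ⊆ P.S) :
    ∑ α ∈ P.S \ I, ∑ β ∈ P.posRoots \ P.rootsIn I, cpair β α
      ≤ ((P.S \ I).card : ℝ) + ((P.posRoots \ P.rootsIn I).card : ℝ) := by
  classical
  set N := P.posRoots \ P.rootsIn I with hN
  set Nfun : V → Finset V := fun α =>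
    N.filter (fun β => β ∈ Submodule.span ℝ (insert α (I : Set V))) with hNfun
  -- Step 1: bound each inner sum
  have hstep1 : ∀ α ∈ P.S \ I, ∑ β ∈ N, cpair β α ≤ 1 + ((Nfun α).card : ℝ) := by
    intro α hα
    rw [Finset.mem_sdiff] at hα
    obtain ⟨hαS, hαI⟩ := hα
    have hsplit : ∑ β ∈ N, cpair β α
        = ∑ β ∈ P.posRoots, cpair β α - ∑ γ ∈ P.posRoots ∩ P.rootsIn I, cpair γ α := by
      rw [hN, ← Finset.sdiff_inter_self_left]
      exact Finset.sum_sdiff_eq_sub Finset.inter_subset_left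
    rw [hsplit, P.sum_cpair_posRoots hαS]
    have hneg : - ∑ γ ∈ P.posRoots ∩ P.rootsIn I, cpair γ α
        = ∑ γ ∈ P.posRoots ∩ P.rootsIn I, (-(cpair γ α)) := by
      rw [Finset.sum_neg_distrib]
    have hcb := P.count_bound hI hαS hαI
    have : ∑ γ ∈ P.posRoots ∩ P.rootsIn I, (-(cpair γ α)) ≤ ((Nfun α).card : ℝ) - 1 := hcb
    linarith [hneg ▸ this]
  -- Step 2: sum the bounds
  have hstep2 : ∑ α ∈ P.S \ I, ∑ β ∈ N, cpair β α
      ≤ ((P.S \ I).card : ℝ) + ∑ α ∈ P.S \ I, ((Nfun α).card : ℝ) := by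
    calc ∑ α ∈ P.S \ I, ∑ β ∈ N, cpair β α
        ≤ ∑ α ∈ P.S \ I, (1 + ((Nfun α).card : ℝ)) := Finset.sum_le_sum hstep1
      _ = ((P.S \ I).card : ℝ) + ∑ α ∈ P.S \ I, ((Nfun α).card : ℝ) := by
          rw [Finset.sum_add_distrib, Finset.sum_const, nsmul_eq_mul, mul_one]
  -- Step 3: the filtered sets are pairwise disjoint subsets of N
  have hstep3 : ∑ α ∈ P.S \ I, (Nfun α).card ≤ N.card := by
    have hdisj : ∀ α ∈ (P.S \ I : Finset V), ∀ α' ∈ (P.S \ I : Finset V), α ≠ α' →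
        Disjoint (Nfun α) (Nfun α') := by
      intro α hα α' hα' hne
      rw [Finset.mem_sdiff] at hα hα'
      exact P.Nfun_disjoint hI hα.1 hα.2 hα'.1 hα'.2 hne
    have hbi : ((P.S \ I).biUnion Nfun).card = ∑ α ∈ P.S \ I, (Nfun α).card :=
      Finset.card_biUnion hdisj
    have hsub : (P.S \ I).biUnion Nfun ⊆ N := by
      intro β hβ
      rw [Finset.mem_biUnion] at hβ
      obtain ⟨α, _, hβα⟩ := hβ
      exact Finset.mem_of_mem_filter β hβα
    rw [← hbi]
    exact Finset.card_le_card hsub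
  have hstep3' : ∑ α ∈ P.S \ I, ((Nfun α).card : ℝ) ≤ (N.card : ℝ) := by
    rw [← Nat.cast_sum]
    exact_mod_cast hstep3
  calc ∑ α ∈ P.S \ I, ∑ β ∈ N, cpair β α
      ≤ ((P.S \ I).card : ℝ) + ∑ α ∈ P.S \ I, ((Nfun α).card : ℝ) := hstep2
    _ ≤ ((P.S \ I).card : ℝ) + (N.card : ℝ) := by linarith
end
end

section
/- Let R be a finite reduced crystallographic irreducible root system with a fixed base S of simple roots, and let I ⊊ S be a maximal proper subset, so S \ I = {α} for a single simple root α. Then ∑_{β ∈ R⁺ \ R_I} ⟨β, α∨⟩ ≤ #(R⁺ \ R_I) + 1. -/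
open scoped RealInnerProductSpace Classical

noncomputable section

open RootSystemWithBase

namespace Aux

variable {V : Type*} [NormedAddCommGroup V] [InnerProductSpace ℝ V]

lemma cpair_self {α : V} (h : α ≠ 0) : cpair α α = 2 := by
  have : ⟪α, α⟫ ≠ 0 := inner_self_ne_zero.mpr h
  rw [cpair, mul_div_assoc, div_self this, mul_one]

lemma cpair_add_left (x y α : V) : cpair (x + y) α = cpair x α + cpair y α := by
  simp [cpair, inner_add_left]; ring

lemma cpair_smul_left (t : ℝ) (x α : V) : cpair (t • x) α = t * cpair x α := by
  simp [cpair, inner_smul_left]; ring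

lemma cpair_neg_right (x α : V) : cpair x (-α) = - cpair x α := by
  simp [cpair, inner_neg_left, inner_neg_right]; ring

lemma cpair_sub_left (x y α : V) : cpair (x - y) α = cpair x α - cpair y α := by
  simp [cpair, inner_sub_left]; ring

lemma mem_closure_iff {S : Finset V} {v : V} :
    v ∈ AddSubmonoid.closure (S : Set V) ↔ ∃ c : V → ℕ, v = ∑ s ∈ S, (c s : ℝ) • s := by
  constructor
  · intro hv
    induction hv using AddSubmonoid.closure_induction with
    | mem x hx =>
      refine ⟨fun t => if t = x then 1 else 0, ?_⟩
      rw [Finset.sum_eq_single x]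
      · simp
      · intro b _ hb; simp [hb]
      · intro h; exact absurd hx h
    | zero => exact ⟨0, by simp⟩
    | add x y _ _ hx hy =>
      obtain ⟨c, hc⟩ := hx
      obtain ⟨d, hd⟩ := hy
      refine ⟨c + d, ?_⟩
      rw [hc, hd, ← Finset.sum_add_distrib]
      congr 1; funext s; simp [Pi.add_apply]; push_cast; rw [add_smul]
  · rintro ⟨c, rfl⟩
    refine AddSubmonoid.sum_mem _ (fun s hs => ?_)
    have := (AddSubmonoid.closure (S : Set V)).nsmul_mem (AddSubmonoid.subset_closure (Finset.mem_coe.mpr hs)) (c s)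
    rwa [← Nat.cast_smul_eq_nsmul ℝ] at this

lemma exists_coord {S : Finset V} (hli : LinearIndependent ℝ (fun s : S => (s : V))) :
    ∃ g : V → (V →ₗ[ℝ] ℝ), ∀ s ∈ S, ∀ t ∈ S, g s t = if t = s then 1 else 0 := by
  have hli' : LinearIndepOn ℝ id (↑S : Set V) := hli
  set B := Module.Basis.extend hli' with hB
  refine ⟨fun v => if h : v ∈ hli'.extend (Set.subset_univ _) then B.coord ⟨v, h⟩ else 0,
    fun s hs t ht => ?_⟩
  have hse : s ∈ hli'.extend (Set.subset_univ _) :=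
    hli'.subset_extend _ (Finset.mem_coe.mpr hs)
  have hte : t ∈ hli'.extend (Set.subset_univ _) :=
    hli'.subset_extend _ (Finset.mem_coe.mpr ht)
  simp only [dif_pos hse]
  have hBt : (B ⟨t, hte⟩ : V) = t := Module.Basis.extend_apply_self hli' ⟨t, hte⟩
  have key : (B.coord ⟨s, hse⟩) t = (B.repr (B ⟨t, hte⟩)) ⟨s, hse⟩ := by
    rw [hBt, Module.Basis.coord_apply]
  rw [key, Module.Basis.repr_self, Finsupp.single_apply]
  by_cases h : t = s
  · rw [if_pos h, if_pos (Subtype.ext h)]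
  · rw [if_neg h, if_neg (fun hc => h (Subtype.ext_iff.mp hc))]

lemma coord_sum {S : Finset V} {g : V → (V →ₗ[ℝ] ℝ)}
    (hg : ∀ s ∈ S, ∀ t ∈ S, g s t = if t = s then 1 else 0)
    {s : V} (hs : s ∈ S) (c : V → ℝ) :
    g s (∑ t ∈ S, c t • t) = c s := by
  rw [map_sum]
  rw [Finset.sum_congr rfl (fun t ht => by rw [map_smul, smul_eq_mul, hg s hs t ht])]
  simp [Finset.sum_ite_eq', hs]

lemma cpair_bound {β α : V} (hα : α ≠ 0) (hβ : β ≠ 0) (hind : ∀ t : ℝ, β ≠ t • α) :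
    0 ≤ cpair β α * cpair α β ∧ cpair β α * cpair α β < 4 := by
  have qα : (0:ℝ) < ⟪α, α⟫ := lt_of_le_of_ne real_inner_self_nonneg
    (Ne.symm (inner_self_ne_zero.mpr hα))
  have qβ : (0:ℝ) < ⟪β, β⟫ := lt_of_le_of_ne real_inner_self_nonneg
    (Ne.symm (inner_self_ne_zero.mpr hβ))
  have hcomm : ⟪α, β⟫ = ⟪β, α⟫ := real_inner_comm β α
  have hprod : cpair β α * cpair α β = 4 * ⟪β, α⟫ ^ 2 / (⟪α, α⟫ * ⟪β, β⟫) := by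
    rw [cpair, cpair, hcomm]; field_simp; ring
  have hv : β - (⟪β, α⟫ / ⟪α, α⟫) • α ≠ 0 := by
    intro h
    exact hind (⟪β, α⟫ / ⟪α, α⟫) (by linear_combination (norm := abel) h)
  have hvv : (0:ℝ) < ⟪β - (⟪β, α⟫ / ⟪α, α⟫) • α, β - (⟪β, α⟫ / ⟪α, α⟫) • α⟫ :=
    lt_of_le_of_ne real_inner_self_nonneg (Ne.symm (inner_self_ne_zero.mpr hv))
  have hexp : ⟪β - (⟪β, α⟫ / ⟪α, α⟫) • α, β - (⟪β, α⟫ / ⟪α, α⟫) • α⟫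
      = ⟪β, β⟫ - ⟪β, α⟫ ^ 2 / ⟪α, α⟫ := by
    simp only [inner_sub_left, inner_sub_right, real_inner_smul_left, real_inner_smul_right,
      hcomm]
    field_simp; ring
  rw [hexp] at hvv
  constructor
  · rw [hprod]
    positivity
  · rw [hprod, div_lt_iff₀ (by positivity)]
    have h2 : ⟪β, α⟫ ^ 2 / ⟪α, α⟫ < ⟪β, β⟫ := by linarith
    rw [div_lt_iff₀ qα] at h2
    nlinarith

variable {P : RootSystemWithBase V}

lemma root_ne_zero {β : V} (hβ : β ∈ P.R) : β ≠ 0 := fun h => P.zero_not_mem (h ▸ hβ)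

lemma neg_mem {β : V} (hβ : β ∈ P.R) : -β ∈ P.R := by
  have h := P.reflect_mem β hβ β hβ
  rwa [cpair_self (root_ne_zero hβ), two_smul, sub_add_eq_sub_sub, sub_self, zero_sub] at h

lemma round_cpair {α β : V} (hα : α ∈ P.R) (hβ : β ∈ P.R) :
    ((round (cpair β α) : ℤ) : ℝ) = cpair β α := by
  obtain ⟨n, hn⟩ := P.crystallographic α hα β hβ
  rw [hn, round_intCast]

lemma cpair_sym (α β : V) (hβ : β ≠ 0) :
    cpair α β = cpair β α * (⟪α, α⟫ / ⟪β, β⟫) := by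
  have hc : ⟪α, β⟫ = ⟪β, α⟫ := real_inner_comm β α
  rw [cpair, cpair, hc]
  rcases eq_or_ne α 0 with rfl | hα
  · simp
  have qα : (0:ℝ) < ⟪α, α⟫ := lt_of_le_of_ne real_inner_self_nonneg
    (Ne.symm (inner_self_ne_zero.mpr hα))
  have qβ : (0:ℝ) < ⟪β, β⟫ := lt_of_le_of_ne real_inner_self_nonneg
    (Ne.symm (inner_self_ne_zero.mpr hβ))
  field_simp

lemma sub_mem {α β : V} (hα : α ∈ P.R) (hβ : β ∈ P.R) (hind : ∀ t : ℝ, β ≠ t • α)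
    (hpos : 0 < cpair β α) : β - α ∈ P.R := by
  have hα0 := root_ne_zero hα
  have hβ0 := root_ne_zero hβ
  obtain ⟨hprod0, hprod4⟩ := cpair_bound hα0 hβ0 hind
  have qα : (0:ℝ) < ⟪α, α⟫ := lt_of_le_of_ne real_inner_self_nonneg
    (Ne.symm (inner_self_ne_zero.mpr hα0))
  have qβ : (0:ℝ) < ⟪β, β⟫ := lt_of_le_of_ne real_inner_self_nonneg
    (Ne.symm (inner_self_ne_zero.mpr hβ0))
  have hnpos : 0 < cpair α β := by
    rw [cpair_sym α β hβ0]
    positivity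
  obtain ⟨mz, hmz⟩ := P.crystallographic α hα β hβ
  obtain ⟨nz, hnz⟩ := P.crystallographic β hβ α hα
  have hmz1 : 1 ≤ mz := by
    have : (0:ℝ) < (mz:ℝ) := hmz ▸ hpos
    exact_mod_cast this
  have hnz1 : 1 ≤ nz := by
    have : (0:ℝ) < (nz:ℝ) := hnz ▸ hnpos
    exact_mod_cast this
  have hprodz : mz * nz < 4 := by
    have : ((mz * nz : ℤ) : ℝ) < 4 := by push_cast; rw [← hmz, ← hnz]; exact hprod4
    exact_mod_cast this
  have hcase : mz = 1 ∨ nz = 1 := by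
    by_contra hc
    push_neg at hc
    have h1 : 2 ≤ mz := by omega
    have h2 : 2 ≤ nz := by omega
    nlinarith
  rcases hcase with h | h
  · have := P.reflect_mem α hα β hβ
    rwa [hmz, h, Int.cast_one, one_smul] at this
  · have := P.reflect_mem β hβ α hα
    rw [hnz, h, Int.cast_one, one_smul] at this
    have h2 := neg_mem this
    rwa [neg_sub] at h2

lemma add_mem' {α β : V} (hα : α ∈ P.R) (hβ : β ∈ P.R) (hind : ∀ t : ℝ, β ≠ t • α)
    (hneg : cpair β α < 0) : β + α ∈ P.R := by
  have h := sub_mem (neg_mem hα) hβ (fun t ht => hind (-t) (by rwa [neg_smul, ← smul_neg]))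
    (by rw [cpair_neg_right]; linarith)
  rwa [sub_neg_eq_add] at h

lemma string_mem {α γ : V} (hα : α ∈ P.R) (hγ : γ ∈ P.R) (hind : ∀ t : ℝ, γ ≠ t • α)
    {K : ℤ} (hK : cpair γ α = -(K : ℝ)) :
    ∀ j : ℕ, (j : ℤ) ≤ K → γ + (j : ℝ) • α ∈ P.R := by
  have hα0 := root_ne_zero hα
  have hγ0 := root_ne_zero hγ
  intro j
  induction j with
  | zero => intro _; simpa using hγ
  | succ j ih =>
    intro hj
    push_cast
    have hjK : (j : ℤ) ≤ K := by omega
    have hmem : γ + (j : ℝ) • α ∈ P.R := ih hjK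
    rcases eq_or_lt_of_le hj with heq | hlt
    · -- top of the string: use the reflection
      have h := P.reflect_mem α hα γ hγ
      rw [hK] at h
      have : γ - -(K:ℝ) • α = γ + ((j:ℕ)+1 : ℝ) • α := by
        rw [← heq]; push_cast; module
      rwa [this] at h
      
    · -- intermediate: j + 2 ≤ K, use add_mem'
      have hj2 : (j : ℤ) + 2 ≤ K := by omega
      -- bound K ≤ 3
      obtain ⟨h0, h4⟩ := cpair_bound hα0 hγ0 hind
      have hK1 : 1 ≤ K := by omega
      have hKpos : (0:ℝ) < (K:ℝ) := by exact_mod_cast hK1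
      have hnneg : cpair α γ < 0 := by
        rw [cpair_sym α γ hγ0, hK]
        have qα : (0:ℝ) < ⟪α, α⟫ := lt_of_le_of_ne real_inner_self_nonneg
          (Ne.symm (inner_self_ne_zero.mpr hα0))
        have qγ : (0:ℝ) < ⟪γ, γ⟫ := lt_of_le_of_ne real_inner_self_nonneg
          (Ne.symm (inner_self_ne_zero.mpr hγ0))
        have : (0:ℝ) < ⟪α, α⟫ / ⟪γ, γ⟫ := by positivity
        nlinarith
      obtain ⟨nz, hnz⟩ := P.crystallographic γ hγ α hα
      have hnz1 : nz ≤ -1 := by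
        have h5 : (nz:ℝ) < 0 := hnz ▸ hnneg
        have h6 : nz < 0 := by exact_mod_cast h5
        omega
      have hK3 : K ≤ 3 := by
        have : cpair γ α * cpair α γ = (K:ℝ) * (-(nz:ℝ)) := by rw [hK, hnz]; ring
        rw [this] at h4
        have h5 : (K:ℝ) * 1 ≤ (K:ℝ) * (-(nz:ℝ)) := by
          apply mul_le_mul_of_nonneg_left _ (le_of_lt hKpos)
          have : (1:ℝ) ≤ -(nz:ℝ) := by
            have : ((-nz : ℤ):ℝ) ≥ 1 := by exact_mod_cast (by omega : (1:ℤ) ≤ -nz)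
            push_cast at this; linarith
          linarith
        have h7 : (K:ℝ) < 4 := by linarith
        have h8 : K < 4 := by exact_mod_cast h7
        omega
      -- cpair (γ + j•α) α = -K + 2j < 0
      have hc : cpair (γ + (j:ℝ) • α) α < 0 := by
        rw [cpair_add_left, cpair_smul_left, cpair_self hα0, hK]
        have hj1 : (j:ℝ) ≤ (K:ℝ) - 2 := by exact_mod_cast (by omega : (j:ℤ) ≤ K - 2)
        have hK3' : (K:ℝ) ≤ 3 := by exact_mod_cast hK3
        linarith
      have hind' : ∀ t : ℝ, γ + (j:ℝ) • α ≠ t • α := by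
        intro t ht
        exact hind (t - j) (by rw [sub_smul]; rw [← ht]; abel)
      have h := add_mem' hα hmem hind' hc
      have : γ + (j:ℝ) • α + α = γ + ((j:ℕ)+1 : ℝ) • α := by push_cast; module
      rwa [this] at h

end Aux

/-- For an irreducible finite reduced crystallographic root system with base
`S` and a maximal proper subset `I ⊊ S` with `S \ I = {α}`:
`∑_{β ∈ R⁺ \ R_I} ⟨β, α∨⟩ ≤ #(R⁺ \ R_I) + 1`. -/
theorem root_inequality_maximal {V : Type*} [NormedAddCommGroup V] [InnerProductSpace ℝ V]
    (P : RootSystemWithBase V) (hirr : P.IsIrreducible)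
    (I : Finset V) (hI : I ⊆ P.S) (hIne : I ≠ P.S)
    (α : V) (hdiff : P.S \ I = {α}) :
    ∑ β ∈ P.posRoots \ P.rootsIn I, cpair β α
      ≤ ((P.posRoots \ P.rootsIn I).card : ℝ) + 1 := by
  classical
  have hαSI : α ∈ P.S \ I := hdiff ▸ Finset.mem_singleton_self α
  have hαS : α ∈ P.S := (Finset.mem_sdiff.mp hαSI).1
  have hαI : α ∉ I := (Finset.mem_sdiff.mp hαSI).2
  have hαR : α ∈ P.R := P.S_subset hαS
  have hα0 : α ≠ 0 := Aux.root_ne_zero hαR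
  obtain ⟨g, hg⟩ := Aux.exists_coord P.indep
  set f := g α with hfdef
  have hfα : f α = 1 := by rw [hfdef, hg α hαS α hαS, if_pos rfl]
  have hfI : ∀ v ∈ Submodule.span ℤ (I : Set V), f v = 0 := by
    intro v hv
    have hle : Submodule.span ℤ (I : Set V) ≤ LinearMap.ker (f.restrictScalars ℤ) := by
      rw [Submodule.span_le]
      intro s hs
      have hsS : s ∈ P.S := hI (Finset.mem_coe.mp hs)
      have hsα : s ≠ α := fun h => hαI (h ▸ Finset.mem_coe.mp hs)
      simp only [SetLike.mem_coe, LinearMap.mem_ker, LinearMap.restrictScalars_apply]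
      rw [hfdef, hg α hαS s hsS, if_neg hsα]
    simpa using hle hv
  have hfclos : ∀ v ∈ AddSubmonoid.closure ((P.S : Set V)), ∃ n : ℕ, f v = (n : ℝ) := by
    intro v hv
    obtain ⟨c, hc⟩ := Aux.mem_closure_iff.mp hv
    exact ⟨c α, by rw [hc, hfdef, Aux.coord_sum hg hαS (fun t => ((c t : ℕ) : ℝ))]⟩
  have hmemPos : ∀ {β : V}, β ∈ P.posRoots ↔ β ∈ P.R ∧ β ∈ AddSubmonoid.closure (P.S : Set V) :=
    fun {β} => Finset.mem_filter
  have hmemIn : ∀ {β : V}, β ∈ P.rootsIn I ↔ β ∈ P.R ∧ β ∈ Submodule.span ℤ (I : Set V) :=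
    fun {β} => Finset.mem_filter
  have hαpos : α ∈ P.posRoots := hmemPos.mpr ⟨hαR, AddSubmonoid.subset_closure hαS⟩
  have hαQ : α ∈ P.posRoots \ P.rootsIn I := by
    rw [Finset.mem_sdiff]
    refine ⟨hαpos, fun hmem => ?_⟩
    have h := hfI α (hmemIn.mp hmem).2
    rw [hfα] at h; norm_num at h
  -- positive roots other than α have a positive coordinate at some simple root ≠ α
  have hother : ∀ β ∈ P.posRoots, β ≠ α → ∃ s ∈ P.S, s ≠ α ∧ (0 : ℝ) < g s β := by
    intro β hβ hne
    have hβR := (hmemPos.mp hβ).1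
    obtain ⟨c, hc⟩ := Aux.mem_closure_iff.mp (hmemPos.mp hβ).2
    by_contra hcon
    push_neg at hcon
    have hzero : ∀ t ∈ P.S, t ≠ α → c t = 0 := by
      intro t ht htα
      have h1 : g t β = (c t : ℝ) := by rw [hc, Aux.coord_sum hg ht (fun u => ((c u : ℕ) : ℝ))]
      have h2 := hcon t ht htα
      rw [h1] at h2
      exact_mod_cast le_antisymm h2 (Nat.cast_nonneg _)
    have hβα : β = ((c α : ℕ) : ℝ) • α := by
      rw [hc, Finset.sum_eq_single_of_mem α hαS]
      intro t ht htα
      rw [hzero t ht htα]; simp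
    rcases P.reduced α hαR ((c α : ℕ) : ℝ) (hβα ▸ hβR) with h1 | h1
    · exact hne (by rw [hβα, h1, one_smul])
    · have h2 : (0:ℝ) ≤ ((c α : ℕ) : ℝ) := Nat.cast_nonneg _
      rw [h1] at h2; norm_num at h2
  -- the reflection σ
  set σ : V → V := fun β => β - cpair β α • α with hσdef
  have hσcpair : ∀ β : V, cpair (σ β) α = - cpair β α := by
    intro β
    show cpair (β - cpair β α • α) α = - cpair β α
    rw [Aux.cpair_sub_left, Aux.cpair_smul_left, Aux.cpair_self hα0]
    ring
  have hσσ : ∀ β : V, σ (σ β) = β := by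
    intro β
    show σ β - cpair (σ β) α • α = β
    rw [hσcpair β]
    show β - cpair β α • α - (- cpair β α) • α = β
    module
  have hgσ : ∀ s ∈ P.S, s ≠ α → ∀ β : V, g s (σ β) = g s β := by
    intro s hs hsα β
    show g s (β - cpair β α • α) = g s β
    rw [map_sub, map_smul, smul_eq_mul, hg s hs α hαS, if_neg (fun h => hsα h.symm)]
    ring
  have hσpos : ∀ β ∈ P.posRoots.erase α, σ β ∈ P.posRoots.erase α := by
    intro β hβe
    obtain ⟨hβα, hβpos⟩ := Finset.mem_erase.mp hβe
    have hβR := (hmemPos.mp hβpos).1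
    have hβclos := (hmemPos.mp hβpos).2
    have hσβR : σ β ∈ P.R := P.reflect_mem α hαR β hβR
    obtain ⟨s, hsS, hsα, hgs⟩ := hother β hβpos hβα
    have hσclos : σ β ∈ AddSubmonoid.closure (P.S : Set V) := by
      rcases P.base_expand (σ β) hσβR with h | h
      · exact h
      · exfalso
        obtain ⟨d, hd⟩ := Aux.mem_closure_iff.mp h
        have h1 : g s (σ β) = g s β := hgσ s hsS hsα β
        have h2 : g s (- σ β) = (d s : ℝ) := by
          rw [hd, Aux.coord_sum hg hsS (fun u => ((d u : ℕ) : ℝ))]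
        have h3 : g s (- σ β) = - g s (σ β) := map_neg _ _
        have h4 : (0:ℝ) ≤ (d s : ℝ) := Nat.cast_nonneg _
        rw [h2, h1] at h3
        linarith
    refine Finset.mem_erase.mpr ⟨fun hσα => ?_, hmemPos.mpr ⟨hσβR, hσclos⟩⟩
    have hβeq : β = (1 + cpair β α) • α := by
      have h5 : β = σ β + cpair β α • α := by
        show β = β - cpair β α • α + cpair β α • α; abel
      rw [hσα] at h5
      rw [add_smul, one_smul]
      exact h5
    rcases P.reduced α hαR (1 + cpair β α) (hβeq ▸ hβR) with h1 | h1
    · have hc0 : cpair β α = 0 := by linarith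
      rw [hc0, add_zero, one_smul] at hβeq
      exact hβα hβeq
    · have hβnegα : β = -α := by
        rw [hβeq, h1, neg_one_smul]
      obtain ⟨n, hn⟩ := hfclos β hβclos
      rw [hβnegα, map_neg, hfα] at hn
      have : (0:ℝ) ≤ (n:ℝ) := Nat.cast_nonneg _
      rw [← hn] at this; norm_num at this
  -- the sum over all positive roots is 2
  have hsum2 : ∑ β ∈ P.posRoots, cpair β α = 2 := by
    have h0 : ∑ β ∈ P.posRoots.erase α, cpair β α
        = ∑ β ∈ P.posRoots.erase α, (- cpair β α) := by
      refine Finset.sum_nbij' σ σ hσpos hσpos (fun a _ => hσσ a) (fun a _ => hσσ a) ?_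
      intro a _
      rw [hσcpair a, neg_neg]
    have h1 : ∑ β ∈ P.posRoots.erase α, cpair β α = 0 := by
      have h2 : ∑ β ∈ P.posRoots.erase α, (- cpair β α)
          = - ∑ β ∈ P.posRoots.erase α, cpair β α := by
        rw [Finset.sum_neg_distrib]
      rw [h2] at h0; linarith
    rw [← Finset.add_sum_erase _ _ hαpos, h1, Aux.cpair_self hα0]; ring
  -- split the sum
  have hsplit : ∑ β ∈ P.posRoots \ P.rootsIn I, cpair β α = 2 - ∑ γ ∈ (P.posRoots ∩ P.rootsIn I), cpair γ α := by
    have h := Finset.sum_sdiff (f := fun β => cpair β α)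
      (Finset.inter_subset_left : P.posRoots ∩ P.rootsIn I ⊆ P.posRoots)
    rw [Finset.sdiff_inter_self_left] at h
    rw [hsum2] at h
    linarith [h]
  set k : V → ℕ := fun γ => (- round (cpair γ α)).toNat with hkdef
  have hkbound : ∀ γ ∈ (P.posRoots ∩ P.rootsIn I), - cpair γ α ≤ (k γ : ℝ) := by
    intro γ hγ
    have hγR := (hmemPos.mp (Finset.mem_inter.mp hγ).1).1
    have hr := Aux.round_cpair hαR hγR
    rw [← hr]
    have h : - round (cpair γ α) ≤ ((- round (cpair γ α)).toNat : ℤ) := Int.self_le_toNat _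
    show -((round (cpair γ α) : ℤ) : ℝ) ≤ (((- round (cpair γ α)).toNat : ℕ) : ℝ)
    exact_mod_cast h
  have hsmulinj : ∀ a b : ℝ, a • α = b • α → a = b := by
    intro a b hab
    have h : (a - b) • α = 0 := by rw [sub_smul, hab, sub_self]
    rcases smul_eq_zero.mp h with h1 | h1
    · linarith [sub_eq_zero.mp (by linarith [h1] : a - b = 0)]
    · exact absurd h1 hα0
  set E := (P.posRoots ∩ P.rootsIn I).biUnion (fun γ => (Finset.range (k γ)).image (fun j : ℕ => γ + ((j:ℝ)+1) • α))
    with hEdef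
  have hEcard : E.card = ∑ γ ∈ (P.posRoots ∩ P.rootsIn I), k γ := by
    rw [hEdef, Finset.card_biUnion]
    · refine Finset.sum_congr rfl fun γ _ => ?_
      rw [Finset.card_image_of_injOn, Finset.card_range]
      intro j _ j' _ hjj
      have h1 : ((j:ℝ)+1) • α = ((j':ℝ)+1) • α := by
        have := add_left_cancel hjj
        exact this
      have h2 := hsmulinj _ _ h1
      have h3 : (j:ℝ) = (j':ℝ) := by linarith
      exact_mod_cast h3
    · intro x hx y hy hxy
      rw [Function.onFun, Finset.disjoint_left]
      intro z hzx hzy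
      obtain ⟨j, _, hjz⟩ := Finset.mem_image.mp hzx
      obtain ⟨j', _, hjz'⟩ := Finset.mem_image.mp hzy
      have hxspan := (hmemIn.mp (Finset.mem_inter.mp hx).2).2
      have hyspan := (hmemIn.mp (Finset.mem_inter.mp hy).2).2
      have hfz1 : f z = (j:ℝ)+1 := by
        rw [← hjz, map_add, map_smul, smul_eq_mul, hfα, hfI x hxspan]; ring
      have hfz2 : f z = (j':ℝ)+1 := by
        rw [← hjz', map_add, map_smul, smul_eq_mul, hfα, hfI y hyspan]; ring
      have hjj' : (j:ℝ) = (j':ℝ) := by rw [hfz1] at hfz2; linarith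
      apply hxy
      have : x + ((j:ℝ)+1) • α = y + ((j:ℝ)+1) • α := by
        rw [hjz, hjj', hjz']
      exact add_right_cancel this
  have hEsub : E ⊆ (P.posRoots \ P.rootsIn I).erase α := by
    intro x hx
    rw [hEdef, Finset.mem_biUnion] at hx
    obtain ⟨γ, hγ, hximg⟩ := hx
    obtain ⟨j, hj, hjx⟩ := Finset.mem_image.mp hximg
    rw [Finset.mem_range] at hj
    have hγpos := (Finset.mem_inter.mp hγ).1
    have hγR := (hmemPos.mp hγpos).1
    have hγclos := (hmemPos.mp hγpos).2
    have hγspan := (hmemIn.mp (Finset.mem_inter.mp hγ).2).2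
    have hfγ : f γ = 0 := hfI γ hγspan
    have hind : ∀ t : ℝ, γ ≠ t • α := by
      intro t ht
      rcases P.reduced α hαR t (ht ▸ hγR) with h | h
      · rw [h, one_smul] at ht
        rw [ht, hfα] at hfγ; norm_num at hfγ
      · rw [h, neg_one_smul] at ht
        rw [ht, map_neg, hfα] at hfγ; norm_num at hfγ
    obtain ⟨nγ, hnγ⟩ := P.crystallographic α hαR γ hγR
    have hK : cpair γ α = -(((- round (cpair γ α)) : ℤ) : ℝ) := by
      rw [hnγ, round_intCast]; push_cast; ring
    have hjk : ((j+1 : ℕ) : ℤ) ≤ - round (cpair γ α) := by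
      have h1 : j < (- round (cpair γ α)).toNat := hj
      omega
    have hstring := Aux.string_mem hαR hγR hind hK (j+1) hjk
    have hcast : (((j+1 : ℕ)) : ℝ) = (j:ℝ)+1 := by push_cast; ring
    rw [hcast] at hstring
    have hxR : x ∈ P.R := hjx ▸ hstring
    have hfx : f x = (j:ℝ)+1 := by
      rw [← hjx, map_add, map_smul, smul_eq_mul, hfα, hfγ]; ring
    have hxclos : x ∈ AddSubmonoid.closure (P.S : Set V) := by
      rw [← hjx, ← hcast, Nat.cast_smul_eq_nsmul ℝ]
      exact AddSubmonoid.add_mem _ hγclos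
        (AddSubmonoid.nsmul_mem _ (AddSubmonoid.subset_closure (Finset.mem_coe.mpr hαS)) _)
    refine Finset.mem_erase.mpr ⟨fun hxα => ?_, Finset.mem_sdiff.mpr
      ⟨hmemPos.mpr ⟨hxR, hxclos⟩, fun hxin => ?_⟩⟩
    · rw [hxα, hfα] at hfx
      have hj0 : (j:ℝ) = 0 := by linarith
      have hj0' : j = 0 := by exact_mod_cast hj0
      rw [hj0'] at hjx
      rw [hxα] at hjx
      have h3 : γ + α = α := by
        calc γ + α = γ + (((0:ℕ):ℝ)+1) • α := by norm_num
        _ = α := hjx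
      have hγ0 : γ = 0 := add_right_cancel (h3.trans (zero_add α).symm)
      exact Aux.root_ne_zero hγR hγ0
    · have h := hfI x (hmemIn.mp hxin).2
      rw [hfx] at h
      have h2 : (0:ℝ) ≤ (j:ℝ) := Nat.cast_nonneg _
      linarith
  have hcard : ∑ γ ∈ (P.posRoots ∩ P.rootsIn I), k γ + 1 ≤ (P.posRoots \ P.rootsIn I).card := by
    have h1 := Finset.card_le_card hEsub
    rw [hEcard, Finset.card_erase_of_mem hαQ] at h1
    have h2 : 1 ≤ (P.posRoots \ P.rootsIn I).card := Finset.card_pos.mpr ⟨α, hαQ⟩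
    omega
  rw [hsplit]
  have hb1 : - ∑ γ ∈ (P.posRoots ∩ P.rootsIn I), cpair γ α ≤ ∑ γ ∈ (P.posRoots ∩ P.rootsIn I), (k γ : ℝ) := by
    rw [← Finset.sum_neg_distrib]
    exact Finset.sum_le_sum hkbound
  have hb2 : (∑ γ ∈ (P.posRoots ∩ P.rootsIn I), (k γ : ℝ)) + 1 ≤ ((P.posRoots \ P.rootsIn I).card : ℝ) := by
    have := hcard
    have hc : ((∑ γ ∈ (P.posRoots ∩ P.rootsIn I), k γ : ℕ) : ℝ) + 1 ≤ ((P.posRoots \ P.rootsIn I).card : ℝ) := by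
      exact_mod_cast this
    rw [Nat.cast_sum] at hc
    exact hc
  linarith
end
end

section
/- Let R be a finite reduced crystallographic irreducible root system with a fixed base S of simple roots, and let I' ⊊ I ⊊ S be subsets. Then the strict inequality ∑_{α ∈ S \ I} ∑_{β ∈ R⁺ \ R_{I'}} ⟨β, α∨⟩ < ∑_{α ∈ S \ I} ∑_{β ∈ R⁺ \ R_I} ⟨β, α∨⟩ holds. -/
open scoped RealInnerProductSpace Classical

noncomputable section

open RootSystemWithBase

section Aux

variable {V : Type*} [NormedAddCommGroup V] [InnerProductSpace ℝ V]
  (P : RootSystemWithBase V)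

lemma root_ne_zero {β : V} (hβ : β ∈ P.R) : β ≠ 0 := by
  rintro rfl; exact P.zero_not_mem hβ

lemma root_inner_self_pos {β : V} (hβ : β ∈ P.R) : 0 < ⟪β, β⟫ :=
  real_inner_self_nonneg.lt_of_ne fun h => root_ne_zero P hβ (inner_self_eq_zero.1 h.symm)

lemma cpair_self_s3 {β : V} (hβ : β ∈ P.R) : cpair β β = 2 := by
  have h := root_inner_self_pos P hβ
  unfold cpair
  field_simp

lemma neg_root_mem {β : V} (hβ : β ∈ P.R) : -β ∈ P.R := by
  have h := P.reflect_mem β hβ β hβ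
  rwa [cpair_self_s3 P hβ, two_smul, sub_add_eq_sub_sub, sub_self, zero_sub] at h

/-- If two distinct roots have positive inner product, their difference is a root. -/
lemma sub_root_mem {β γ : V} (hβ : β ∈ P.R) (hγ : γ ∈ P.R) (hne : β ≠ γ)
    (hpos : 0 < ⟪β, γ⟫) : β - γ ∈ P.R := by
  have hγ0 : γ ≠ 0 := root_ne_zero P hγ
  have hβ0 : β ≠ 0 := root_ne_zero P hβ
  have hindep : ∀ t : ℝ, β ≠ t • γ := by
    intro t ht
    rcases P.reduced γ hγ t (ht ▸ hβ) with rfl | rfl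
    · exact hne (by simpa using ht)
    · rw [ht] at hpos
      simp only [inner_smul_left, RCLike.conj_to_real] at hpos
      have := root_inner_self_pos P hγ
      nlinarith
  -- strict Cauchy-Schwarz
  have hCS : ⟪β, γ⟫ * ⟪β, γ⟫ < ⟪β, β⟫ * ⟪γ, γ⟫ := by
    have hlt : ⟪β, γ⟫ < ‖β‖ * ‖γ‖ := by
      rw [inner_lt_norm_mul_iff_real]
      intro h
      have hn : (0:ℝ) < ‖γ‖ := norm_pos_iff.2 hγ0
      have hb : β = (‖γ‖)⁻¹ • (‖γ‖ • β) := by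
        rw [smul_smul, inv_mul_cancel₀ hn.ne', one_smul]
      have hb2 : β = (‖γ‖⁻¹ * ‖β‖) • γ := by
        conv_lhs => rw [hb, h, smul_smul]
      exact hindep _ hb2
    have h1 : ⟪β, γ⟫ * ⟪β, γ⟫ < (‖β‖ * ‖γ‖) * (‖β‖ * ‖γ‖) := by nlinarith [norm_nonneg β, norm_nonneg γ]
    calc ⟪β, γ⟫ * ⟪β, γ⟫ < (‖β‖ * ‖γ‖) * (‖β‖ * ‖γ‖) := h1
      _ = ⟪β, β⟫ * ⟪γ, γ⟫ := by
          rw [real_inner_self_eq_norm_mul_norm, real_inner_self_eq_norm_mul_norm]; ring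
  obtain ⟨a, ha⟩ := P.crystallographic γ hγ β hβ
  obtain ⟨b, hb⟩ := P.crystallographic β hβ γ hγ
  have hββ := root_inner_self_pos P hβ
  have hγγ := root_inner_self_pos P hγ
  have hsym : ⟪γ, β⟫ = ⟪β, γ⟫ := real_inner_comm β γ
  have hmn : (a : ℝ) * (b : ℝ) < 4 := by
    have : (a : ℝ) * (b : ℝ) = 4 * (⟪β, γ⟫ * ⟪β, γ⟫) / (⟪β, β⟫ * ⟪γ, γ⟫) := by
      rw [← ha, ← hb]; unfold cpair; rw [hsym]; field_simp; ring
    rw [this]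
    rw [div_lt_iff₀ (by positivity)]
    nlinarith
  have hapos : (0:ℝ) < a := by
    rw [← ha]; unfold cpair
    exact div_pos (by linarith) hγγ
  have hbpos : (0:ℝ) < b := by
    rw [← hb]; unfold cpair; rw [hsym]
    exact div_pos (by linarith) hββ
  have ha1 : 1 ≤ a := by exact_mod_cast hapos
  have hb1 : 1 ≤ b := by exact_mod_cast hbpos
  have : a = 1 ∨ b = 1 := by
    by_contra h
    push_neg at h
    have ha2 : 2 ≤ a := by omega
    have hb2 : 2 ≤ b := by omega
    have : (4:ℝ) ≤ (a:ℝ) * b := by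
      have : (4:ℤ) ≤ a * b := by nlinarith
      exact_mod_cast this
    linarith
  rcases this with rfl | rfl
  · have h := P.reflect_mem γ hγ β hβ
    rwa [ha, Int.cast_one, one_smul] at h
  · have h := P.reflect_mem β hβ γ hγ
    rw [hb, Int.cast_one, one_smul] at h
    have := neg_root_mem P h
    rwa [neg_sub] at this

/-- Existence of natural-number coefficients for elements of the `ℕ`-closure of a finset. -/
lemma exists_nat_coeffs {T : Finset V} {β : V} (hβ : β ∈ AddSubmonoid.closure (T : Set V)) :
    ∃ c : V → ℕ, β = ∑ s ∈ T, c s • s := by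
  have : β ∈ Submodule.span ℕ (T : Set V) := by
    rw [← Submodule.span_nat_eq_addSubmonoidClosure] at hβ
    exact hβ
  obtain ⟨f, -, hf⟩ := Submodule.mem_span_finset.1 this
  exact ⟨f, hf.symm⟩

/-- Uniqueness of real coefficients with respect to the base `S`. -/
lemma coeff_unique {f g : V → ℝ}
    (h : ∑ s ∈ P.S, f s • s = ∑ s ∈ P.S, g s • s) : ∀ s ∈ P.S, f s = g s := by
  intro s hs
  have h0 : ∑ s ∈ P.S, (f s - g s) • s = 0 := by
    simp only [sub_smul, Finset.sum_sub_distrib, h, sub_self]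
  have h1 : ∑ x ∈ P.S.attach, (f x.1 - g x.1) • (x.1 : V) = 0 := by
    rw [← h0]
    exact Finset.sum_attach P.S (fun s => (f s - g s) • s)
  have h2 := linearIndependent_iff'.1 P.indep P.S.attach (fun x => f x.1 - g x.1) h1
    ⟨s, hs⟩ (P.S.mem_attach _)
  simp only at h2
  linarith

lemma sum_indicator_real {T : Finset V} {t : V} (ht : t ∈ T) :
    ∑ s ∈ T, (if s = t then (1:ℝ) else 0) • s = t := by
  simp only [ite_smul, one_smul, zero_smul]
  simp [Finset.sum_ite_eq', ht]

lemma nat_rep_real {T : Finset V} {β : V} {c : V → ℕ} (h : β = ∑ s ∈ T, c s • s) :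
    β = ∑ s ∈ T, ((c s : ℝ)) • s := by
  rw [h]
  exact Finset.sum_congr rfl fun s _ => (Nat.cast_smul_eq_nsmul ℝ (c s) s).symm

/-- If `β ∈ span ℝ T` for `T ⊆ S` and `β = ∑_{s ∈ S} c s • s`, then `c` vanishes off `T`. -/
lemma coeff_zero_of_mem_span {T : Finset V} (hT : T ⊆ P.S) {β : V} {c : V → ℝ}
    (hrep : β = ∑ s ∈ P.S, c s • s) (hsp : β ∈ Submodule.span ℝ (T : Set V)) :
    ∀ s ∈ P.S, s ∉ T → c s = 0 := by
  obtain ⟨g, -, hg⟩ := Submodule.mem_span_finset.1 hsp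
  have hg' : β = ∑ s ∈ P.S, (if s ∈ T then g s else 0) • s := by
    rw [← hg, ← Finset.sum_subset hT (fun x _ hx => by simp [hx])]
    exact Finset.sum_congr rfl fun s hs => by simp [hs]
  intro s hs hsT
  have := coeff_unique P (hrep ▸ hg') s hs
  simpa [hsT] using this

/-- A difference of two distinct simple roots is not a nonnegative combination. -/
lemma simple_sub_not_closure {α γ : V} (hα : α ∈ P.S) (hγ : γ ∈ P.S) (hne : α ≠ γ) :
    α - γ ∉ AddSubmonoid.closure (P.S : Set V) := by
  intro hcl
  obtain ⟨c, hc⟩ := exists_nat_coeffs hcl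
  have hc' := nat_rep_real hc
  have h1 : α = ∑ s ∈ P.S, ((if s = γ then (1:ℝ) else 0) + (c s : ℝ)) • s := by
    rw [Finset.sum_congr rfl (fun s _ => add_smul _ _ s), Finset.sum_add_distrib,
      sum_indicator_real hγ, ← hc']
    abel
  have h2 : α = ∑ s ∈ P.S, (if s = α then (1:ℝ) else 0) • s := (sum_indicator_real hα).symm
  have := coeff_unique P (h2 ▸ h1 : _) γ hγ
  rw [if_pos rfl, if_neg (Ne.symm hne)] at this
  have : (0:ℝ) ≤ (c γ : ℝ) := by positivity
  linarith [coeff_unique P (h2 ▸ h1 : _) γ hγ, this]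

/-- Distinct simple roots have nonpositive inner product. -/
lemma simple_inner_nonpos {α γ : V} (hα : α ∈ P.S) (hγ : γ ∈ P.S) (hne : α ≠ γ) :
    ⟪α, γ⟫ ≤ 0 := by
  by_contra h
  push_neg at h
  have hsub : α - γ ∈ P.R :=
    sub_root_mem P (P.S_subset hα) (P.S_subset hγ) hne h
  rcases P.base_expand _ hsub with hcl | hcl
  · exact simple_sub_not_closure P hα hγ hne hcl
  · rw [neg_sub] at hcl
    exact simple_sub_not_closure P hγ hα (Ne.symm hne) hcl

/-- Orthogonality extends from generators to spans. -/
lemma span_orth {A B : Finset V} (h : ∀ a ∈ A, ∀ b ∈ B, ⟪a, b⟫ = 0) :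
    ∀ x ∈ Submodule.span ℝ (A : Set V), ∀ y ∈ Submodule.span ℝ (B : Set V), ⟪x, y⟫ = 0 := by
  intro x hx y hy
  induction hx using Submodule.span_induction with
  | mem a ha =>
      induction hy using Submodule.span_induction with
      | mem b hb => exact h a ha b hb
      | zero => simp
      | add y z _ _ hy hz => rw [inner_add_right, hy, hz, add_zero]
      | smul t y _ hy => rw [real_inner_smul_right, hy, mul_zero]
  | zero => simp
  | add x z _ _ hx hz => rw [inner_add_left, hx, hz, add_zero]
  | smul t x _ hx => rw [real_inner_smul_left, hx, mul_zero]

lemma add_rep {β β' : V} {c d : V → ℝ} (hβ : β = ∑ s ∈ P.S, c s • s)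
    (hβ' : β' = ∑ s ∈ P.S, d s • s) : β + β' = ∑ s ∈ P.S, (c s + d s) • s := by
  rw [Finset.sum_congr rfl (fun s _ => add_smul (c s) (d s) s), Finset.sum_add_distrib,
    ← hβ, ← hβ']

lemma sub_single_rep {β γ : V} (hγ : γ ∈ P.S) {c : V → ℝ} (h : β = ∑ s ∈ P.S, c s • s) :
    β - γ = ∑ s ∈ P.S, (c s - if s = γ then (1:ℝ) else 0) • s := by
  rw [Finset.sum_congr rfl (fun s _ => sub_smul (c s) _ s), Finset.sum_sub_distrib,
    ← h, sum_indicator_real hγ]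

/-- Coefficients of a nonzero element are not all zero. -/
lemma exists_coeff_ne_zero {β : V} (hβ0 : β ≠ 0) {c : V → ℕ}
    (h : β = ∑ s ∈ P.S, c s • s) : ∃ t ∈ P.S, c t ≠ 0 := by
  by_contra hall
  push_neg at hall
  apply hβ0
  rw [h]
  exact Finset.sum_eq_zero fun s hs => by rw [hall s hs, zero_smul]

/-- The key impossibility: a root cannot be the sum of a root lying in the span of `S₂`
and a simple root orthogonal to `S₂`. -/
lemma mixed_root_absurd {S₂ : Finset V} (hS₂ : S₂ ⊆ P.S) {γ β' : V} (hγS : γ ∈ P.S)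
    (hγ2 : γ ∉ S₂) (hβ' : β' ∈ P.R) (hcl : β' ∈ AddSubmonoid.closure (P.S : Set V))
    (hsp : β' ∈ Submodule.span ℝ (S₂ : Set V))
    (horth : ∀ b ∈ S₂, ⟪γ, b⟫ = 0) (hsum : β' + γ ∈ P.R) : False := by
  obtain ⟨c, hc⟩ := exists_nat_coeffs hcl
  have hcρ : β' = ∑ s ∈ P.S, ((c s : ℝ)) • s := nat_rep_real hc
  have hc0 : ∀ s ∈ P.S, s ∉ S₂ → (c s : ℝ) = 0 := coeff_zero_of_mem_span P hS₂ hcρ hsp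
  have hcγ : (c γ : ℝ) = 0 := hc0 γ hγS hγ2
  obtain ⟨t, htS, htne⟩ := exists_coeff_ne_zero P (root_ne_zero P hβ') hc
  have htγ : t ≠ γ := by rintro rfl; exact htne (by exact_mod_cast hcγ)
  -- inner products
  have hβγ : ⟪β', γ⟫ = 0 := by
    refine span_orth (A := S₂) (B := {γ}) ?_ β' hsp γ ?_
    · intro a ha b hb
      have hbγ : b = γ := by simpa using hb
      subst hbγ
      rw [real_inner_comm]
      exact horth a ha
    · exact Submodule.subset_span (by simp)
  have hγγ : 0 < ⟪γ, γ⟫ := root_inner_self_pos P (P.S_subset hγS)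
  have hcp : cpair (β' + γ) γ = 2 := by
    unfold cpair
    rw [inner_add_left, hβγ, zero_add]
    field_simp
  have hσ : β' - γ ∈ P.R := by
    have h := P.reflect_mem γ (P.S_subset hγS) (β' + γ) hsum
    rw [hcp, two_smul] at h
    have : β' + γ - (γ + γ) = β' - γ := by abel
    rwa [this] at h
  have hrep : β' - γ = ∑ s ∈ P.S, ((c s : ℝ) - if s = γ then (1:ℝ) else 0) • s :=
    sub_single_rep P hγS hcρ
  rcases P.base_expand _ hσ with hg | hg
  · obtain ⟨f, hf⟩ := exists_nat_coeffs hg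
    have hfρ : β' - γ = ∑ s ∈ P.S, ((f s : ℝ)) • s := nat_rep_real hf
    have := coeff_unique P (hfρ ▸ hrep : _) γ hγS
    rw [hcγ, if_pos rfl] at this
    have h0 : (0:ℝ) ≤ (f γ : ℝ) := by positivity
    linarith
  · rw [neg_sub] at hg
    obtain ⟨f, hf⟩ := exists_nat_coeffs hg
    have hfρ : γ - β' = ∑ s ∈ P.S, ((f s : ℝ)) • s := nat_rep_real hf
    have hrep' : γ - β' = ∑ s ∈ P.S, ((if s = γ then (1:ℝ) else 0) - (c s : ℝ)) • s := by
      have h1 : γ - β' = -(β' - γ) := by abel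
      rw [h1, hrep, ← Finset.sum_neg_distrib]
      exact Finset.sum_congr rfl fun s _ => by rw [← neg_smul]; ring_nf
    have := coeff_unique P (hfρ ▸ hrep' : _) t htS
    rw [if_neg htγ] at this
    have h0 : (0:ℝ) ≤ (f t : ℝ) := by positivity
    have h1 : (1:ℝ) ≤ (c t : ℝ) := by exact_mod_cast Nat.one_le_iff_ne_zero.2 htne
    linarith

/-- Every root lies in the span of `S₁` or of `S₂` whenever `S = S₁ ∪ S₂` is an
orthogonal decomposition of the base. -/
lemma span_dichotomy {S₁ S₂ : Finset V} (hU : S₁ ∪ S₂ = P.S)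
    (hd : ∀ s ∈ S₁, s ∉ S₂) (horth : ∀ a ∈ S₁, ∀ b ∈ S₂, ⟪a, b⟫ = 0) :
    ∀ β ∈ P.R, β ∈ Submodule.span ℝ ((S₁ : Finset V) : Set V) ∨
      β ∈ Submodule.span ℝ ((S₂ : Finset V) : Set V) := by
  have hS₁ : S₁ ⊆ P.S := hU ▸ Finset.subset_union_left
  have hS₂ : S₂ ⊆ P.S := hU ▸ Finset.subset_union_right
  have key : ∀ n : ℕ, ∀ β ∈ P.R, β ∈ AddSubmonoid.closure (P.S : Set V) →
      ∀ c : V → ℕ, β = ∑ s ∈ P.S, c s • s → ∑ s ∈ P.S, c s = n →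
      β ∈ Submodule.span ℝ ((S₁ : Finset V) : Set V) ∨
        β ∈ Submodule.span ℝ ((S₂ : Finset V) : Set V) := by
    intro n
    induction n using Nat.strong_induction_on with
    | _ n ih =>
      intro β hβ hβcl c hc hcn
      have hβ0 : β ≠ 0 := root_ne_zero P hβ
      have hcρ : β = ∑ s ∈ P.S, ((c s : ℝ)) • s := nat_rep_real hc
      -- find a simple root with positive inner product and positive coefficient
      obtain ⟨γ, hγS, hγc, hγpos⟩ :
          ∃ γ ∈ P.S, c γ ≠ 0 ∧ 0 < ⟪β, γ⟫ := by
        by_contra hno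
        push_neg at hno
        have hββ : 0 < ⟪β, β⟫ := root_inner_self_pos P hβ
        have hexp : ⟪β, β⟫ = ∑ s ∈ P.S, (c s : ℝ) * ⟪β, s⟫ := by
          nth_rewrite 2 [hcρ]
          rw [inner_sum]
          exact Finset.sum_congr rfl fun s _ => by rw [real_inner_smul_right]
        have : ∑ s ∈ P.S, (c s : ℝ) * ⟪β, s⟫ ≤ 0 := by
          refine Finset.sum_nonpos fun s hs => ?_
          by_cases h0 : c s = 0
          · simp [h0]
          · have h1 := hno s hs h0
            have h2 : (0:ℝ) ≤ (c s : ℝ) := by positivity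
            exact mul_nonpos_of_nonneg_of_nonpos h2 h1
        rw [hexp] at hββ
        linarith
      by_cases hβγ : β = γ
      · subst hβγ
        rw [← hU] at hγS
        rcases Finset.mem_union.1 hγS with h | h
        · exact Or.inl (Submodule.subset_span (by exact_mod_cast h))
        · exact Or.inr (Submodule.subset_span (by exact_mod_cast h))
      have hγR : γ ∈ P.R := P.S_subset hγS
      have hsub : β - γ ∈ P.R := sub_root_mem P hβ hγR hβγ hγpos
      -- β - γ is again a nonnegative combination
      have hsubcl : β - γ ∈ AddSubmonoid.closure (P.S : Set V) := by
        rcases P.base_expand _ hsub with h | h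
        · exact h
        rw [neg_sub] at h
        exfalso
        obtain ⟨d, hd'⟩ := exists_nat_coeffs h
        have hdρ : γ - β = ∑ s ∈ P.S, ((d s : ℝ)) • s := nat_rep_real hd'
        have hγrep : γ = ∑ s ∈ P.S, ((c s : ℝ) + (d s : ℝ)) • s := by
          have := add_rep P hcρ hdρ
          rwa [add_sub_cancel] at this
        have hγind : γ = ∑ s ∈ P.S, (if s = γ then (1:ℝ) else 0) • s :=
          (sum_indicator_real hγS).symm
        have huniq := fun s hs => coeff_unique P (hγind ▸ hγrep : _) s hs
        -- c is supported at γ with coefficient 1, so β = γ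
        have hβγ' : β = γ := by
          rw [hcρ, Finset.sum_eq_single γ]
          · have h1 := huniq γ hγS
            rw [if_pos rfl] at h1
            have hc1 : (1:ℝ) ≤ (c γ : ℝ) := by
              exact_mod_cast Nat.one_le_iff_ne_zero.2 hγc
            have hd0 : (0:ℝ) ≤ (d γ : ℝ) := by positivity
            have : (c γ : ℝ) = 1 := by linarith
            rw [this, one_smul]
          · intro s hs hsne
            have h1 := huniq s hs
            rw [if_neg hsne] at h1
            have hc0 : (0:ℝ) ≤ (c s : ℝ) := by positivity
            have hd0 : (0:ℝ) ≤ (d s : ℝ) := by positivity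
            have : (c s : ℝ) = 0 := by linarith
            rw [this, zero_smul]
          · intro h; exact (h hγS).elim
        exact hβγ hβγ'
      -- coefficients of β - γ
      obtain ⟨c', hc'⟩ := exists_nat_coeffs hsubcl
      have hc'ρ : β - γ = ∑ s ∈ P.S, ((c' s : ℝ)) • s := nat_rep_real hc'
      have hrel : ∀ s ∈ P.S, (c' s : ℝ) = (c s : ℝ) - (if s = γ then (1:ℝ) else 0) :=
        fun s hs => coeff_unique P (hc'ρ ▸ sub_single_rep P hγS hcρ : _) s hs
      have hn1 : 1 ≤ n := by
        have := Finset.single_le_sum (f := c) (fun i _ => Nat.zero_le _) hγS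
        omega
      have hsum' : ∑ s ∈ P.S, c' s = n - 1 := by
        have hcast : ((∑ s ∈ P.S, c' s : ℕ) : ℝ) = ((n - 1 : ℕ) : ℝ) := by
          push_cast [Nat.cast_sub hn1]
          rw [Finset.sum_congr rfl hrel, Finset.sum_sub_distrib]
          have h2 : ∑ s ∈ P.S, (if s = γ then (1:ℝ) else 0) = 1 := by
            simp [Finset.sum_ite_eq', hγS]
          rw [h2, ← hcn]
          push_cast
          ring
        exact_mod_cast hcast
      have hlt : n - 1 < n := by omega
      have hih := ih (n - 1) hlt (β - γ) hsub hsubcl c' hc' hsum'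
      have hβeq : (β - γ) + γ = β := by abel
      rw [← hU] at hγS
      rcases Finset.mem_union.1 hγS with hγ1 | hγ2
      · rcases hih with h | h
        · left
          have := Submodule.add_mem _ h (Submodule.subset_span (s := ((S₁ : Finset V) : Set V))
            (by exact_mod_cast hγ1))
          rwa [hβeq] at this
        · exact (mixed_root_absurd P hS₂ (hS₁ hγ1) (hd γ hγ1) hsub hsubcl h
            (fun b hb => horth γ hγ1 b hb) (by rw [hβeq]; exact hβ)).elim
      · rcases hih with h | h
        · exact (mixed_root_absurd P hS₁ (hS₂ hγ2) (fun hγ1 => hd γ hγ1 hγ2) hsub hsubcl h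
            (fun b hb => by rw [real_inner_comm]; exact horth b hb γ hγ2)
            (by rw [hβeq]; exact hβ)).elim
        · right
          have := Submodule.add_mem _ h (Submodule.subset_span (s := ((S₂ : Finset V) : Set V))
            (by exact_mod_cast hγ2))
          rwa [hβeq] at this
  intro β hβ
  rcases P.base_expand _ hβ with h | h
  · obtain ⟨c, hc⟩ := exists_nat_coeffs h
    exact key _ β hβ h c hc rfl
  · have hnβ : -β ∈ P.R := neg_root_mem P hβ
    obtain ⟨c, hc⟩ := exists_nat_coeffs h
    rcases key _ (-β) hnβ h c hc rfl with hh | hh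
    · left
      have := Submodule.neg_mem _ hh
      rwa [neg_neg] at this
    · right
      have := Submodule.neg_mem _ hh
      rwa [neg_neg] at this

lemma sum_indicator_nat {T : Finset V} {t : V} (ht : t ∈ T) :
    ∑ s ∈ T, (if s = t then (1:ℕ) else 0) • s = t := by
  have h : ∀ s ∈ T, (if s = t then (1:ℕ) else 0) • s = if s = t then s else 0 := by
    intro s _; by_cases h : s = t <;> simp [h]
  rw [Finset.sum_congr rfl h]
  simp [Finset.sum_ite_eq', ht]

lemma inner_rep {β u : V} {c : V → ℝ} (h : β = ∑ s ∈ P.S, c s • s) :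
    ⟪β, u⟫ = ∑ s ∈ P.S, c s * ⟪s, u⟫ := by
  rw [h, sum_inner]
  exact Finset.sum_congr rfl fun s _ => real_inner_smul_left s u (c s)

lemma inner_neg_of_support {β u b : V} {c : V → ℕ} (hrep : β = ∑ s ∈ P.S, c s • s)
    (huS : u ∈ P.S) (hcu : c u = 0) (hbS : b ∈ P.S) (hcb : c b ≠ 0) (hbu : b ≠ u)
    (hbuin : ⟪b, u⟫ < 0) : ⟪β, u⟫ < 0 := by
  rw [inner_rep P (nat_rep_real hrep)]
  have hlt : ∑ s ∈ P.S, ((c s : ℝ)) * ⟪s, u⟫ < ∑ s ∈ P.S, (0:ℝ) := by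
    refine Finset.sum_lt_sum (fun s hs => ?_) ⟨b, hbS, ?_⟩
    · by_cases h : s = u
      · subst h; rw [hcu]; simp
      · exact mul_nonpos_of_nonneg_of_nonpos (by positivity) (simple_inner_nonpos P hs huS h)
    · have h0 : (0:ℝ) < (c b : ℝ) := by exact_mod_cast Nat.pos_of_ne_zero hcb
      exact mul_neg_of_pos_of_neg h0 hbuin
  simpa using hlt

/-- In an irreducible system with `I' ⊊ I ⊊ S`, there is a positive root in `R_I \ R_{I'}`
pairing strictly negatively with some simple root outside `I`. -/
lemma exists_strict_witness (hirr : P.IsIrreducible) {I' I : Finset V}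
    (h1 : I' ⊂ I) (h2 : I ⊂ P.S) :
    ∃ α β : V, α ∈ P.S ∧ α ∉ I ∧ β ∈ P.R ∧ β ∈ AddSubmonoid.closure (P.S : Set V) ∧
      β ∈ Submodule.span ℤ ((I : Finset V) : Set V) ∧
      β ∉ Submodule.span ℤ ((I' : Finset V) : Set V) ∧ ⟪β, α⟫ < 0 := by
  obtain ⟨δ, hδI, hδI'⟩ := Finset.exists_of_ssubset h1
  have hI'I : I' ⊆ I := h1.subset
  have hIS : I ⊆ P.S := h2.subset
  have hI'S : I' ⊆ P.S := hI'I.trans hIS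
  have hδS : δ ∈ P.S := hIS hδI
  set rel : V → V → Prop := fun s t => t ∈ P.S ∧ ⟪s, t⟫ ≠ 0 with hrel_def
  -- Step 1: every simple root is reachable from δ
  have hreach : ∀ t ∈ P.S, Relation.ReflTransGen rel δ t := by
    by_contra hno
    push_neg at hno
    obtain ⟨t₀, ht₀S, ht₀⟩ := hno
    set K := P.S.filter (fun t => Relation.ReflTransGen rel δ t) with hK
    have hKS : K ⊆ P.S := Finset.filter_subset _ _
    have hδK : δ ∈ K := Finset.mem_filter.2 ⟨hδS, Relation.ReflTransGen.refl⟩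
    have ht₀K : t₀ ∉ K := fun h => ht₀ (Finset.mem_filter.1 h).2
    have horthK : ∀ a ∈ K, ∀ b ∈ P.S \ K, ⟪a, b⟫ = 0 := by
      intro a ha b hb
      by_contra hne
      rcases Finset.mem_sdiff.1 hb with ⟨hbS, hbK⟩
      exact hbK (Finset.mem_filter.2 ⟨hbS, ((Finset.mem_filter.1 ha).2).tail ⟨hbS, hne⟩⟩)
    have hdich := span_dichotomy P (Finset.union_sdiff_of_subset hKS)
        (fun s hs h => (Finset.mem_sdiff.1 h).2 hs) horthK
    refine hirr (P.R.filter (· ∈ Submodule.span ℝ ((K : Finset V) : Set V)))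
      (P.R.filter (· ∉ Submodule.span ℝ ((K : Finset V) : Set V)))
      (Finset.filter_union_filter_not_eq _ _) ⟨δ, ?_⟩ ⟨t₀, ?_⟩ ?_
    · exact Finset.mem_filter.2 ⟨P.S_subset hδS,
        Submodule.subset_span (Finset.mem_coe.2 hδK)⟩
    · refine Finset.mem_filter.2 ⟨P.S_subset ht₀S, fun hsp => ?_⟩
      have := coeff_zero_of_mem_span P hKS (sum_indicator_real ht₀S).symm hsp t₀ ht₀S ht₀K
      simp at this
    · intro a ha b hb
      rcases Finset.mem_filter.1 ha with ⟨haR, haK⟩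
      rcases Finset.mem_filter.1 hb with ⟨hbR, hbK⟩
      rcases hdich b hbR with h | h
      · exact absurd h hbK
      · exact span_orth horthK a haK b h
  -- Step 2: walk from δ, carrying a growing positive root supported in I
  have hInv : ∀ t, Relation.ReflTransGen rel δ t →
      (∃ α β : V, ∃ c : V → ℕ, α ∈ P.S ∧ α ∉ I ∧ β ∈ P.R ∧
        β = ∑ s ∈ P.S, c s • s ∧ (∀ s ∈ P.S, s ∉ I → c s = 0) ∧ c δ ≠ 0 ∧ ⟪β, α⟫ < 0) ∨
      (t ∈ I ∧ ∃ β : V, ∃ c : V → ℕ, β ∈ P.R ∧ β = ∑ s ∈ P.S, c s • s ∧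
        (∀ s ∈ P.S, s ∉ I → c s = 0) ∧ c δ ≠ 0 ∧ c t ≠ 0) := by
    intro t ht
    induction ht with
    | refl =>
        right
        refine ⟨hδI, δ, (fun s => if s = δ then 1 else 0), P.S_subset hδS,
          (sum_indicator_nat hδS).symm, fun s _ hsI => if_neg ?_, by simp, by simp⟩
        rintro rfl; exact hsI hδI
    | @tail b u hδb hbu ih =>
        rcases ih with hG | ⟨hbI, β, c, hβR, hβrep, hsupp, hcδ, hcb⟩
        · exact Or.inl hG
        obtain ⟨huS, hinner⟩ := hbu
        by_cases hub : u = b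
        · subst hub; exact Or.inr ⟨hbI, β, c, hβR, hβrep, hsupp, hcδ, hcb⟩
        have hbS : b ∈ P.S := hIS hbI
        have hbu_ne : b ≠ u := fun h => hub h.symm
        have hbu_neg : ⟪b, u⟫ < 0 := (simple_inner_nonpos P hbS huS hbu_ne).lt_of_ne hinner
        by_cases huI : u ∈ I
        · by_cases hcu : c u = 0
          · -- extend β by u
            have hneg : ⟪β, u⟫ < 0 :=
              inner_neg_of_support P hβrep huS hcu hbS hcb hbu_ne hbu_neg
            have hnu : -u ∈ P.R := neg_root_mem P (P.S_subset huS)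
            have hβne : β ≠ -u := by
              intro heq
              have hrepm : -u = ∑ s ∈ P.S, (-(if s = u then (1:ℝ) else 0)) • s := by
                rw [Finset.sum_congr rfl (fun s _ => neg_smul (if s = u then (1:ℝ) else 0) s),
                  Finset.sum_neg_distrib, sum_indicator_real huS]
              have e1 : ∑ s ∈ P.S, ((c s : ℝ)) • s
                  = ∑ s ∈ P.S, (-(if s = u then (1:ℝ) else 0)) • s := by
                rw [← nat_rep_real hβrep, ← hrepm, heq]
              have h2 := coeff_unique P e1 u huS
              rw [hcu] at h2
              norm_num at h2
            have hβu : β + u ∈ P.R := by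
              have h := sub_root_mem P hβR hnu hβne (by rw [inner_neg_right]; linarith)
              rwa [sub_neg_eq_add] at h
            refine Or.inr ⟨huI, β + u, (fun s => if s = u then c s + 1 else c s), hβu,
              ?_, ?_, ?_, by simp⟩
            · have hsplit : ∀ s ∈ P.S, (if s = u then c s + 1 else c s) • s
                  = c s • s + (if s = u then (1:ℕ) else 0) • s := by
                intro s _
                by_cases h : s = u
                · subst h; simp [add_smul]
                · simp [h]
              rw [Finset.sum_congr rfl hsplit, Finset.sum_add_distrib, ← hβrep,
                sum_indicator_nat huS]
            · intro s hs hsI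
              have hsu : ¬ s = u := fun h => hsI (by rw [h]; exact huI)
              simp only [if_neg hsu]
              exact hsupp s hs hsI
            · by_cases h : δ = u
              · simp [h]
              · simpa [h] using hcδ
          · exact Or.inr ⟨huI, β, c, hβR, hβrep, hsupp, hcδ, hcu⟩
        · -- u ∉ I : the goal is achieved
          have hcu : c u = 0 := hsupp u huS huI
          have hneg : ⟪β, u⟫ < 0 :=
            inner_neg_of_support P hβrep huS hcu hbS hcb hbu_ne hbu_neg
          exact Or.inl ⟨u, β, c, huS, huI, hβR, hβrep, hsupp, hcδ, hneg⟩
  -- Conclude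
  obtain ⟨α₀, hα₀S, hα₀I⟩ := Finset.exists_of_ssubset h2
  rcases hInv α₀ (hreach α₀ hα₀S) with hG | ⟨hα₀I', _⟩
  swap
  · exact absurd hα₀I' hα₀I
  obtain ⟨α, β, c, hαS, hαI, hβR, hβrep, hsupp, hcδ, hneg⟩ := hG
  refine ⟨α, β, hαS, hαI, hβR, ?_, ?_, ?_, hneg⟩
  · rw [hβrep]
    exact AddSubmonoid.sum_mem _ fun s hs =>
      nsmul_mem (AddSubmonoid.subset_closure (Finset.mem_coe.2 hs)) _
  · have hβI : β = ∑ s ∈ I, c s • s := by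
      rw [hβrep, ← Finset.sum_subset hIS
        (fun x hx hxI => by rw [hsupp x hx hxI, zero_smul])]
    rw [hβI]
    exact Submodule.sum_mem _ fun s hs =>
      nsmul_mem (Submodule.subset_span (Finset.mem_coe.2 hs)) _
  · intro hz
    have hzR : β ∈ Submodule.span ℝ ((I' : Finset V) : Set V) :=
      Submodule.span_subset_span ℤ ℝ _ hz
    have := coeff_zero_of_mem_span P hI'S (nat_rep_real hβrep) hzR δ hδS hδI'
    exact hcδ (by exact_mod_cast this)

/-- `cpair β α ≤ 0` when `α` is simple outside `I` and `β` is a positive root in `R_I`. -/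
lemma cpair_nonpos {I : Finset V} (hIS : I ⊆ P.S) {α β : V} (hαS : α ∈ P.S) (hαI : α ∉ I)
    (hβcl : β ∈ AddSubmonoid.closure (P.S : Set V))
    (hβI : β ∈ Submodule.span ℤ ((I : Finset V) : Set V)) : cpair β α ≤ 0 := by
  obtain ⟨c, hc⟩ := exists_nat_coeffs hβcl
  have hcρ := nat_rep_real hc
  have hsp : β ∈ Submodule.span ℝ ((I : Finset V) : Set V) :=
    Submodule.span_subset_span ℤ ℝ _ hβI
  have hsupp := coeff_zero_of_mem_span P hIS hcρ hsp
  have hinner : ⟪β, α⟫ ≤ 0 := by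
    rw [inner_rep P hcρ]
    refine Finset.sum_nonpos fun s hs => ?_
    by_cases h : s = α
    · subst h; rw [hsupp s hs hαI]; simp
    · exact mul_nonpos_of_nonneg_of_nonpos (by positivity) (simple_inner_nonpos P hs hαS h)
  have hαα : 0 < ⟪α, α⟫ := root_inner_self_pos P (P.S_subset hαS)
  unfold cpair
  exact div_nonpos_of_nonpos_of_nonneg (by linarith) (le_of_lt hαα)

end Aux

/-- If `I' ⊊ I ⊊ S`, then
`∑_{α ∈ S \ I} ∑_{β ∈ R⁺ \ R_{I'}} ⟨β, α∨⟩ < ∑_{α ∈ S \ I} ∑_{β ∈ R⁺ \ R_I} ⟨β, α∨⟩`. -/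
theorem coefficient_sum_strict_monotonicity {V : Type*} [NormedAddCommGroup V]
    [InnerProductSpace ℝ V] (P : RootSystemWithBase V) (hirr : P.IsIrreducible)
    (I' I : Finset V) (h1 : I' ⊂ I) (h2 : I ⊂ P.S) :
    ∑ α ∈ P.S \ I, ∑ β ∈ P.posRoots \ P.rootsIn I', cpair β α
      < ∑ α ∈ P.S \ I, ∑ β ∈ P.posRoots \ P.rootsIn I, cpair β α := by
  classical
  have hIS : I ⊆ P.S := h2.subset
  set A := P.posRoots \ P.rootsIn I' with hA
  set B := P.posRoots \ P.rootsIn I with hB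
  have hBA : B ⊆ A := by
    intro x hx
    rcases Finset.mem_sdiff.1 hx with ⟨hxp, hxI⟩
    refine Finset.mem_sdiff.2 ⟨hxp, fun hxI' => hxI ?_⟩
    rcases Finset.mem_filter.1 hxI' with ⟨hxR, hxsp⟩
    exact Finset.mem_filter.2 ⟨hxR, Submodule.span_mono (Finset.coe_subset.2 h1.subset) hxsp⟩
  -- membership description of A \ B
  have hABmem : ∀ β ∈ A \ B, β ∈ P.R ∧ β ∈ AddSubmonoid.closure (P.S : Set V) ∧
      β ∈ Submodule.span ℤ ((I : Finset V) : Set V) := by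
    intro β hβ
    rcases Finset.mem_sdiff.1 hβ with ⟨hβA, hβB⟩
    rcases Finset.mem_sdiff.1 hβA with ⟨hβp, hβI'⟩
    rcases Finset.mem_filter.1 hβp with ⟨hβR, hβcl⟩
    have hβI : β ∈ P.rootsIn I := by
      by_contra h
      exact hβB (Finset.mem_sdiff.2 ⟨hβp, h⟩)
    exact ⟨hβR, hβcl, (Finset.mem_filter.1 hβI).2⟩
  have hterm : ∀ α ∈ P.S \ I, ∀ β ∈ A \ B, cpair β α ≤ 0 := by
    intro α hα β hβ
    rcases Finset.mem_sdiff.1 hα with ⟨hαS, hαI⟩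
    obtain ⟨hβR, hβcl, hβsp⟩ := hABmem β hβ
    exact cpair_nonpos P hIS hαS hαI hβcl hβsp
  -- the strict witness
  obtain ⟨α₀, β₀, hα₀S, hα₀I, hβ₀R, hβ₀cl, hβ₀I, hβ₀I', hβ₀neg⟩ :=
    exists_strict_witness P hirr h1 h2
  have hα₀mem : α₀ ∈ P.S \ I := Finset.mem_sdiff.2 ⟨hα₀S, hα₀I⟩
  have hβ₀mem : β₀ ∈ A \ B := by
    have hβ₀pos : β₀ ∈ P.posRoots := Finset.mem_filter.2 ⟨hβ₀R, hβ₀cl⟩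
    refine Finset.mem_sdiff.2 ⟨Finset.mem_sdiff.2 ⟨hβ₀pos, fun h => hβ₀I'
      (Finset.mem_filter.1 h).2⟩, fun h => ?_⟩
    exact (Finset.mem_sdiff.1 h).2 (Finset.mem_filter.2 ⟨hβ₀R, hβ₀I⟩)
  have hcp0 : cpair β₀ α₀ < 0 := by
    have hαα : 0 < ⟪α₀, α₀⟫ := root_inner_self_pos P (P.S_subset hα₀S)
    unfold cpair
    exact div_neg_of_neg_of_pos (by linarith) hαα
  -- strict negativity of the difference
  have hE : ∑ α ∈ P.S \ I, ∑ β ∈ A \ B, cpair β α < 0 := by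
    have h0 : ∀ α ∈ P.S \ I, ∑ β ∈ A \ B, cpair β α ≤ 0 := fun α hα =>
      Finset.sum_nonpos fun β hβ => hterm α hα β hβ
    have hstrict : ∑ β ∈ A \ B, cpair β α₀ < 0 := by
      have h := Finset.sum_lt_sum (s := A \ B) (f := fun β => cpair β α₀)
        (g := fun _ => (0:ℝ)) (fun β hβ => hterm α₀ hα₀mem β hβ) ⟨β₀, hβ₀mem, hcp0⟩
      simpa using h
    have h := Finset.sum_lt_sum (s := P.S \ I) (f := fun α => ∑ β ∈ A \ B, cpair β α)
      (g := fun _ => (0:ℝ)) h0 ⟨α₀, hα₀mem, hstrict⟩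
    simpa using h
  -- reassemble the sums
  have hsplit : ∀ α : V, ∑ β ∈ A, cpair β α = ∑ β ∈ A \ B, cpair β α + ∑ β ∈ B, cpair β α :=
    fun α => (Finset.sum_sdiff hBA).symm
  calc ∑ α ∈ P.S \ I, ∑ β ∈ A, cpair β α
      = ∑ α ∈ P.S \ I, (∑ β ∈ A \ B, cpair β α + ∑ β ∈ B, cpair β α) :=
        Finset.sum_congr rfl fun α _ => hsplit α
    _ = (∑ α ∈ P.S \ I, ∑ β ∈ A \ B, cpair β α) + ∑ α ∈ P.S \ I, ∑ β ∈ B, cpair β α :=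
        Finset.sum_add_distrib
    _ < 0 + ∑ α ∈ P.S \ I, ∑ β ∈ B, cpair β α := by linarith
    _ = ∑ α ∈ P.S \ I, ∑ β ∈ B, cpair β α := zero_add _
end
end
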